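/- arXiv:1707.04667 — 7 statements merged into one kernel-verified Lean document; each statement's English description precedes it below -/
import Mathlib

section
/- As operators on P⁻, where x_j also denotes left multiplication by x_j: for 1 ≤ i ≤ n−1, r_i x_{i+1} + x_{i+1} r_i = s_i and r_i x_i + x_i r_i = s_i; and for j ≠ i, i+1, r_i x_j + x_j r_i = 0. -/
noncomputable section

/-- The defining relations of the skew polynomial ring
`P⁻ = ℂ⟨x₁,…,xₙ⟩/⟨xᵢxⱼ + xⱼxᵢ : i ≠ j⟩`. -/
inductive SkewRel (n : ℕ) : FreeAlgebra ℂ (Fin n) → FreeAlgebra ℂ (Fin n) → Prop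
  | anticomm (i j : Fin n) (h : i ≠ j) :
      SkewRel n (FreeAlgebra.ι ℂ i * FreeAlgebra.ι ℂ j)
        (-(FreeAlgebra.ι ℂ j * FreeAlgebra.ι ℂ i))

/-- The skew polynomial ring `P⁻`. -/
abbrev SkewPoly (n : ℕ) := RingQuot (SkewRel n)

/-- The generators `xᵢ` of `P⁻`. -/
def X {n : ℕ} (i : Fin n) : SkewPoly n :=
  RingQuot.mkAlgHom ℂ (SkewRel n) (FreeAlgebra.ι ℂ i)

/-- `f ∈ P⁻` is homogeneous of degree `d`: it lies in the span of the degree-`d` monomials. -/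
def IsHomog {n : ℕ} (d : ℕ) (f : SkewPoly n) : Prop :=
  f ∈ Submodule.span ℂ
    {m : SkewPoly n | ∃ w : List (Fin n), w.length = d ∧ m = (w.map X).prod}

/-- The operator of left multiplication by `xᵢ` on `P⁻`. -/
def mulX {n : ℕ} (i : Fin n) : Module.End ℂ (SkewPoly n) :=
  LinearMap.mulLeft ℂ (X i)


lemma homogX {n : ℕ} (j : Fin n) : IsHomog 1 (X j) :=
  Submodule.subset_span ⟨[j], rfl, by simp⟩

/-- `rᵢ x_{i+1} + x_{i+1} rᵢ = sᵢ`, `rᵢ xᵢ + xᵢ rᵢ = sᵢ`, and `rᵢ xⱼ + xⱼ rᵢ = 0`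
for `j ≠ i, i+1`, as operators on `P⁻` (`xⱼ` denoting left multiplication). -/
theorem stmt3 (n : ℕ) (hn : 2 ≤ n)
    -- `s i k` is the algebra automorphism of `P⁻` swapping `xᵢ` and `x_k`
    (s : Fin n → Fin n → (SkewPoly n →ₐ[ℂ] SkewPoly n))
    (hs : ∀ i k j : Fin n, i ≠ k → s i k (X j) = X (Equiv.swap i k j))
    -- `pd i k` is the odd divided difference operator `∂_{i,k}`
    (pd : Fin n → Fin n → Module.End ℂ (SkewPoly n))
    (hpdi : ∀ i k : Fin n, i ≠ k → pd i k (X i) = 1)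
    (hpdk : ∀ i k : Fin n, i ≠ k → pd i k (X k) = 1)
    (hpd0 : ∀ i k j : Fin n, i ≠ k → j ≠ i → j ≠ k → pd i k (X j) = 0)
    (hpdL : ∀ i k : Fin n, i ≠ k → ∀ (d : ℕ) (f g : SkewPoly n), IsHomog d f →
      pd i k (f * g) = pd i k f * g + (-1 : ℂ) ^ d • (s i k f * pd i k g))
    -- `r i k = ∂_{i,k} ∘ s_{i,k}`
    (r : Fin n → Fin n → Module.End ℂ (SkewPoly n))
    (hr : ∀ i k : Fin n, i ≠ k → r i k = pd i k ∘ₗ (s i k).toLinearMap)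
    (i i' : Fin n) (hii' : (i' : ℕ) = (i : ℕ) + 1) :
    r i i' * mulX i' + mulX i' * r i i' = (s i i').toLinearMap ∧
    r i i' * mulX i + mulX i * r i i' = (s i i').toLinearMap ∧
    (∀ j : Fin n, j ≠ i → j ≠ i' → r i i' * mulX j + mulX j * r i i' = 0) := by
  have hik : i ≠ i' := by
    intro h; subst h; omega
  refine ⟨?_, ?_, fun j hji hji' => ?_⟩
  · apply LinearMap.ext; intro f
    have h1 : s i i' (X i' * f) = X i * s i i' f := by
      rw [map_mul, hs i i' i' hik, Equiv.swap_apply_right]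
    have h2 := hpdL i i' hik 1 (X i) (s i i' f) (homogX i)
    rw [hpdi i i' hik, hs i i' i hik, Equiv.swap_apply_left] at h2
    simp only [hr i i' hik, mulX, LinearMap.add_apply, Module.End.mul_apply,
      LinearMap.coe_comp, Function.comp_apply, LinearMap.mulLeft_apply,
      AlgHom.toLinearMap_apply, h1, h2, pow_one, neg_smul, one_smul, one_mul]
    module
  · apply LinearMap.ext; intro f
    have h1 : s i i' (X i * f) = X i' * s i i' f := by
      rw [map_mul, hs i i' i hik, Equiv.swap_apply_left]
    have h2 := hpdL i i' hik 1 (X i') (s i i' f) (homogX i')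
    rw [hpdk i i' hik, hs i i' i' hik, Equiv.swap_apply_right] at h2
    simp only [hr i i' hik, mulX, LinearMap.add_apply, Module.End.mul_apply,
      LinearMap.coe_comp, Function.comp_apply, LinearMap.mulLeft_apply,
      AlgHom.toLinearMap_apply, h1, h2, pow_one, neg_smul, one_smul, one_mul]
    module
  · apply LinearMap.ext; intro f
    have h1 : s i i' (X j * f) = X j * s i i' f := by
      rw [map_mul, hs i i' j hik, Equiv.swap_apply_of_ne_of_ne hji hji']
    have h2 := hpdL i i' hik 1 (X j) (s i i' f) (homogX j)
    rw [hpd0 i i' j hik hji hji', hs i i' j hik,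
      Equiv.swap_apply_of_ne_of_ne hji hji'] at h2
    simp only [hr i i' hik, mulX, LinearMap.add_apply, Module.End.mul_apply,
      LinearMap.coe_comp, Function.comp_apply, LinearMap.mulLeft_apply,
      AlgHom.toLinearMap_apply, h1, h2, pow_one, neg_smul, one_smul, zero_mul,
      LinearMap.zero_apply]
    module
end
end

section
/- For all 1 ≤ i ≠ k ≤ n and all f ∈ P⁻, the operator r_{i,k} has the explicit form (x_i² − x_k²)·r_{i,k}(f) = (x_i − x_k)·s_{i,k}(f) − x_i·τ_i(f) + x_k·τ_k(f); that is, r_{i,k} = (x_i² − x_k²)^{−1}[(x_i − x_k)s_{i,k} − x_i τ_i + x_k τ_k]. (Note that x_i² − x_k² is central in P⁻.) -/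
noncomputable section

section genericAux
variable {R : Type*} [Ring R]

lemma case1Aux (a b A B C ρ : R) (hba : b*a = -(a*b))
    (IH : (a^2-b^2)*ρ = (a-b)*A - a*B + b*C) :
    (a^2-b^2)*(A - a*ρ) = (a-b)*(b*A) - a*(-a*B) + b*(a*C) := by
  have key : ∀ t : R, b*(a*t) = -(a*(b*t)) := fun t => by
    rw [← mul_assoc, hba, neg_mul, mul_assoc]
  have hcom : (a^2-b^2)*(a*ρ) = a*((a^2-b^2)*ρ) := by
    simp only [pow_two, sub_mul, mul_sub, mul_assoc, key, mul_neg, neg_neg]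
  rw [mul_sub, hcom, IH]
  simp only [pow_two, sub_mul, mul_sub, mul_add, add_mul, mul_assoc, mul_neg, neg_mul,
    neg_neg, key]
  abel

lemma case2Aux (a b A B C ρ : R) (hba : b*a = -(a*b))
    (IH : (a^2-b^2)*ρ = (a-b)*A - a*B + b*C) :
    (a^2-b^2)*(A - b*ρ) = (a-b)*(a*A) - a*(b*B) + b*(-b*C) := by
  have key : ∀ t : R, b*(a*t) = -(a*(b*t)) := fun t => by
    rw [← mul_assoc, hba, neg_mul, mul_assoc]
  have hcom : (a^2-b^2)*(b*ρ) = b*((a^2-b^2)*ρ) := by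
    simp only [pow_two, sub_mul, mul_sub, mul_assoc, key, mul_neg, neg_neg]
  rw [mul_sub, hcom, IH]
  simp only [pow_two, sub_mul, mul_sub, mul_add, add_mul, mul_assoc, mul_neg, neg_mul,
    neg_neg, key]
  abel

lemma case3Aux (a b c A B C ρ : R) (hca : c*a = -(a*c)) (hcb : c*b = -(b*c))
    (IH : (a^2-b^2)*ρ = (a-b)*A - a*B + b*C) :
    (a^2-b^2)*(-(c*ρ)) = (a-b)*(c*A) - a*(c*B) + b*(c*C) := by
  have hac : a*c = -(c*a) := by rw [hca, neg_neg]
  have hbc : b*c = -(c*b) := by rw [hcb, neg_neg]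
  have keya : ∀ t : R, a*(c*t) = -(c*(a*t)) := fun t => by
    rw [← mul_assoc, hac, neg_mul, mul_assoc]
  have keyb : ∀ t : R, b*(c*t) = -(c*(b*t)) := fun t => by
    rw [← mul_assoc, hbc, neg_mul, mul_assoc]
  have hcom : (a^2-b^2)*(c*ρ) = c*((a^2-b^2)*ρ) := by
    simp only [pow_two, sub_mul, mul_sub, mul_assoc, keya, keyb, mul_neg, neg_neg]
  rw [mul_neg, hcom, IH]
  simp only [pow_two, sub_mul, mul_sub, mul_add, add_mul, mul_assoc, mul_neg, neg_mul,
    neg_neg, keya, keyb]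
  abel

end genericAux

lemma X_anticomm {n : ℕ} {i j : Fin n} (h : i ≠ j) : X i * X j = -(X j * X i) := by
  have := RingQuot.mkAlgHom_rel ℂ (SkewRel.anticomm i j h)
  simpa [X, map_mul, map_neg] using this

lemma mem_span_monomials {n : ℕ} (f : SkewPoly n) :
    f ∈ Submodule.span ℂ {m : SkewPoly n | ∃ w : List (Fin n), m = (w.map X).prod} := by
  set S : Set (SkewPoly n) := {m | ∃ w : List (Fin n), m = (w.map X).prod} with hS
  set M := Submodule.span ℂ S with hM
  have hmul : ∀ x ∈ M, ∀ y ∈ M, x * y ∈ M := by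
    intro x hx y hy
    have h2 : M * M ≤ M := by
      rw [hM, Submodule.span_mul_span]
      refine Submodule.span_mono ?_
      rintro _ ⟨_, ⟨w1, rfl⟩, _, ⟨w2, rfl⟩, rfl⟩
      exact ⟨w1 ++ w2, by simp⟩
    exact h2 (Submodule.mul_mem_mul hx hy)
  have hsurj : Function.Surjective (RingQuot.mkAlgHom ℂ (SkewRel n)) :=
    RingQuot.mkAlgHom_surjective ℂ (SkewRel n)
  obtain ⟨p, rfl⟩ := hsurj f
  induction p using FreeAlgebra.induction with
  | grade0 c =>
      have h1 : (1 : SkewPoly n) ∈ M := Submodule.subset_span ⟨[], by simp⟩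
      have := M.smul_mem c h1
      simpa [Algebra.algebraMap_eq_smul_one, map_smul] using this
  | grade1 j => exact Submodule.subset_span ⟨[j], by simp [X]⟩
  | add a b ha hb => simpa [map_add] using M.add_mem ha hb
  | mul a b ha hb => simpa [map_mul] using hmul _ ha _ hb

/-- The explicit form of `r_{i,k}`:
`(xᵢ² − x_k²)·r_{i,k}(f) = (xᵢ − x_k)·s_{i,k}(f) − xᵢ·τᵢ(f) + x_k·τ_k(f)`. -/
theorem stmt5 (n : ℕ) (hn : 2 ≤ n)
    -- `s i k` is the algebra automorphism of `P⁻` swapping `xᵢ` and `x_k`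
    (s : Fin n → Fin n → (SkewPoly n →ₐ[ℂ] SkewPoly n))
    (hs : ∀ i k j : Fin n, i ≠ k → s i k (X j) = X (Equiv.swap i k j))
    -- `τ i` is the algebra automorphism of `P⁻` sending `xᵢ` to `-xᵢ` and fixing the others
    (τ : Fin n → (SkewPoly n →ₐ[ℂ] SkewPoly n))
    (hτ : ∀ i j : Fin n, τ i (X j) = if j = i then -X j else X j)
    -- `pd i k` is the odd divided difference operator `∂_{i,k}`
    (pd : Fin n → Fin n → Module.End ℂ (SkewPoly n))
    (hpdi : ∀ i k : Fin n, i ≠ k → pd i k (X i) = 1)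
    (hpdk : ∀ i k : Fin n, i ≠ k → pd i k (X k) = 1)
    (hpd0 : ∀ i k j : Fin n, i ≠ k → j ≠ i → j ≠ k → pd i k (X j) = 0)
    (hpdL : ∀ i k : Fin n, i ≠ k → ∀ (d : ℕ) (f g : SkewPoly n), IsHomog d f →
      pd i k (f * g) = pd i k f * g + (-1 : ℂ) ^ d • (s i k f * pd i k g))
    -- `r i k = ∂_{i,k} ∘ s_{i,k}`
    (r : Fin n → Fin n → Module.End ℂ (SkewPoly n))
    (hr : ∀ i k : Fin n, i ≠ k → r i k = pd i k ∘ₗ (s i k).toLinearMap)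
    (i k : Fin n) (hik : i ≠ k) (f : SkewPoly n) :
    (X i ^ 2 - X k ^ 2) * r i k f
      = (X i - X k) * s i k f - X i * τ i f + X k * τ k f := by
  -- `pd i k 1 = 0`
  have homog_one : IsHomog 0 (1 : SkewPoly n) :=
    Submodule.subset_span ⟨[], rfl, by simp⟩
  have homog_X : ∀ j : Fin n, IsHomog 1 (X j) := fun j =>
    Submodule.subset_span ⟨[j], rfl, by simp⟩
  have pd_one : pd i k 1 = 0 := by
    have h := hpdL i k hik 0 1 1 homog_one
    simp only [one_mul, mul_one, pow_zero, one_smul, map_one] at h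
    have h2 : pd i k 1 = pd i k 1 + pd i k 1 := by simpa using h
    have := add_left_cancel (a := pd i k 1) (b := 0) (c := pd i k 1) (by simpa using h2.symm)
    exact this.symm
  have r_apply : ∀ g : SkewPoly n, r i k g = pd i k (s i k g) := by
    intro g; rw [hr i k hik]; rfl
  -- main computation on monomials
  have main : ∀ w : List (Fin n),
      (X i ^ 2 - X k ^ 2) * r i k ((w.map X).prod)
        = (X i - X k) * s i k ((w.map X).prod) - X i * τ i ((w.map X).prod)
          + X k * τ k ((w.map X).prod) := by
    intro w
    induction w with
    | nil =>
        simp only [List.map_nil, List.prod_nil, r_apply, map_one, pd_one, mul_zero, mul_one]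
        abel
    | cons j w ih =>
        simp only [List.map_cons, List.prod_cons]
        set g := (w.map X).prod with hg
        -- compute r i k (X j * g)
        have hrm : r i k (X j * g)
            = pd i k (X (Equiv.swap i k j)) * s i k g - X j * r i k g := by
          rw [r_apply, map_mul, hs i k j hik,
            hpdL i k hik 1 _ _ (homog_X _), hs i k _ hik, Equiv.swap_apply_self]
          rw [← r_apply]
          rw [pow_one, neg_one_smul ℂ (X j * r i k ((List.map X w).prod)), sub_eq_add_neg]
        rw [hrm, map_mul, map_mul, map_mul, hs i k j hik, hτ i j, hτ k j]
        by_cases hji : j = i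
        · simp only [hji, Equiv.swap_apply_left, hpdk i k hik, one_mul, if_pos rfl,
            if_neg hik]
          exact case1Aux (X i) (X k) (s i k g) (τ i g) (τ k g) (r i k g)
            (X_anticomm hik.symm) ih
        · by_cases hjk : j = k
          · simp only [hjk, Equiv.swap_apply_right, hpdi i k hik, one_mul,
              if_neg hik.symm, if_pos rfl]
            exact case2Aux (X i) (X k) (s i k g) (τ i g) (τ k g) (r i k g)
              (X_anticomm hik.symm) ih
          · rw [Equiv.swap_apply_of_ne_of_ne hji hjk, hpd0 i k j hik hji hjk, zero_mul,
              zero_sub]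
            simp only [if_neg hji, if_neg hjk]
            exact case3Aux (X i) (X k) (X j) (s i k g) (τ i g) (τ k g) (r i k g)
              (X_anticomm hji) (X_anticomm hjk) ih
  -- extend by linearity
  have hf := mem_span_monomials f
  induction hf using Submodule.span_induction with
  | mem m hm => obtain ⟨w, rfl⟩ := hm; exact main w
  | zero => simp
  | add x y hx hy ihx ihy =>
      simp only [map_add, mul_add, ihx, ihy]; abel
  | smul c x hx ihx =>
      simp only [map_smul, mul_smul_comm, ihx, smul_add, smul_sub]
end
end

section
/- The double summation Σ_{i=1}^n (Σ_{k ≠ i} r_{i,k})² = 0 as an operator on P⁻. -/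
noncomputable section

namespace Stmt7Aux

variable {n : ℕ}

/-- The set of monomials in `P⁻`. -/
def MS (n : ℕ) : Set (SkewPoly n) := {m | ∃ w : List (Fin n), m = (w.map X).prod}

lemma X_mem_MS (j : Fin n) : X j ∈ MS n := ⟨[j], by simp⟩

lemma MS_span_top : Submodule.span ℂ (MS n) = ⊤ := by
  have h1 : (1 : SkewPoly n) ∈ Submodule.span ℂ (MS n) :=
    Submodule.subset_span ⟨[], by simp⟩
  have hmul : ∀ x y : SkewPoly n, x ∈ Submodule.span ℂ (MS n) →
      y ∈ Submodule.span ℂ (MS n) → x * y ∈ Submodule.span ℂ (MS n) := by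
    intro x y hx hy
    have hle : Submodule.span ℂ (MS n) * Submodule.span ℂ (MS n)
        ≤ Submodule.span ℂ (MS n) := by
      rw [Submodule.span_mul_span]
      refine Submodule.span_le.2 ?_
      rintro z hz
      rcases Set.mem_mul.1 hz with ⟨a, ⟨w, rfl⟩, b, ⟨v, rfl⟩, rfl⟩
      exact Submodule.subset_span ⟨w ++ v, by simp⟩
    exact hle (Submodule.mul_mem_mul hx hy)
  have htop : Algebra.adjoin ℂ (Set.range (X : Fin n → SkewPoly n)) = ⊤ := by
    have h1' : Set.range (X : Fin n → SkewPoly n)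
        = (RingQuot.mkAlgHom ℂ (SkewRel n)) '' Set.range (FreeAlgebra.ι ℂ) := by
      rw [← Set.range_comp]; rfl
    rw [h1', ← AlgHom.map_adjoin, FreeAlgebra.adjoin_range_ι, Algebra.map_top]
    exact (AlgHom.range_eq_top _).2 (RingQuot.mkAlgHom_surjective ℂ _)
  refine top_unique ?_
  intro x _
  have hx : x ∈ Algebra.adjoin ℂ (Set.range (X : Fin n → SkewPoly n)) := by
    rw [htop]; trivial
  have hle : Algebra.adjoin ℂ (Set.range (X : Fin n → SkewPoly n))
      ≤ (Submodule.span ℂ (MS n)).toSubalgebra h1 hmul := by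
    apply Algebra.adjoin_le
    rintro y ⟨j, rfl⟩
    exact Submodule.subset_span (X_mem_MS j)
  exact hle hx

lemma end_ext {T : Module.End ℂ (SkewPoly n)}
    (h : ∀ w : List (Fin n), T ((w.map X).prod) = 0) : T = 0 := by
  ext f
  have hf : f ∈ Submodule.span ℂ (MS n) := by rw [MS_span_top]; trivial
  simp only [LinearMap.zero_apply]
  induction hf using Submodule.span_induction with
  | mem x hx => rcases hx with ⟨w, rfl⟩; exact h w
  | zero => simp
  | add x y _ _ hx hy => simp [hx, hy]
  | smul c x _ hx => simp [hx]

lemma isHomog_one : IsHomog 0 (1 : SkewPoly n) :=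
  Submodule.subset_span ⟨[], rfl, by simp⟩

lemma isHomog_X (j : Fin n) : IsHomog 1 (X j) :=
  Submodule.subset_span ⟨[j], rfl, by simp⟩

/-- `swap a b j ∈ {a,b}` iff `j ∈ {a,b}`. -/
lemma swap_cond (a b j : Fin n) :
    (Equiv.swap a b j = a ∨ Equiv.swap a b j = b) ↔ (j = a ∨ j = b) := by
  by_cases h1 : j = a
  · subst h1; simp [Equiv.swap_apply_left]
  by_cases h2 : j = b
  · subst h2; simp [Equiv.swap_apply_right]
  · simp [Equiv.swap_apply_of_ne_of_ne h1 h2, h1, h2]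

/-- Conjugation of a transposition. -/
lemma swap_conj (c d a b j : Fin n) :
    Equiv.swap (Equiv.swap c d a) (Equiv.swap c d b) j
      = Equiv.swap c d (Equiv.swap a b (Equiv.swap c d j)) := by
  rw [Equiv.swap_apply_apply]
  simp [Equiv.Perm.mul_apply, Equiv.swap_inv]

section Ops

variable {s : Fin n → Fin n → (SkewPoly n →ₐ[ℂ] SkewPoly n)}
variable {pd : Fin n → Fin n → Module.End ℂ (SkewPoly n)}

/-- Generic uniqueness: two operators killing `1` and satisfying the same
recursion on `X j * g` agree. -/
lemma unique_op (c : Fin n → ℂ) (t : Fin n → Fin n)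
    (D₁ D₂ : Module.End ℂ (SkewPoly n))
    (h1 : D₁ 1 = 0) (h2 : D₂ 1 = 0)
    (r1 : ∀ j g, D₁ (X j * g) = c j • g - X (t j) * D₁ g)
    (r2 : ∀ j g, D₂ (X j * g) = c j • g - X (t j) * D₂ g) :
    D₁ = D₂ := by
  rw [← sub_eq_zero]
  apply end_ext
  intro w
  induction w with
  | nil => simp [h1, h2]
  | cons j w ih =>
    rw [LinearMap.sub_apply] at ih ⊢
    have hm : (((j :: w).map X).prod) = X j * ((w.map X).prod) := by simp
    rw [hm, r1, r2]
    rw [sub_eq_zero] at ih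
    rw [ih]
    abel

end Ops

end Stmt7Aux

set_option maxHeartbeats 2000000 in
open Stmt7Aux in
/-- The double summation `Σ_{i=1}^n (Σ_{k ≠ i} r_{i,k})² = 0` as an operator on `P⁻`. -/
theorem stmt7 (n : ℕ) (hn : 2 ≤ n)
    -- `s i k` is the algebra automorphism of `P⁻` swapping `xᵢ` and `x_k`
    (s : Fin n → Fin n → (SkewPoly n →ₐ[ℂ] SkewPoly n))
    (hs : ∀ i k j : Fin n, i ≠ k → s i k (X j) = X (Equiv.swap i k j))
    -- `pd i k` is the odd divided difference operator `∂_{i,k}`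
    (pd : Fin n → Fin n → Module.End ℂ (SkewPoly n))
    (hpdi : ∀ i k : Fin n, i ≠ k → pd i k (X i) = 1)
    (hpdk : ∀ i k : Fin n, i ≠ k → pd i k (X k) = 1)
    (hpd0 : ∀ i k j : Fin n, i ≠ k → j ≠ i → j ≠ k → pd i k (X j) = 0)
    (hpdL : ∀ i k : Fin n, i ≠ k → ∀ (d : ℕ) (f g : SkewPoly n), IsHomog d f →
      pd i k (f * g) = pd i k f * g + (-1 : ℂ) ^ d • (s i k f * pd i k g))
    -- `r i k = ∂_{i,k} ∘ s_{i,k}`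
    (r : Fin n → Fin n → Module.End ℂ (SkewPoly n))
    (hr : ∀ i k : Fin n, i ≠ k → r i k = pd i k ∘ₗ (s i k).toLinearMap)
 :
    ∑ i : Fin n, (∑ k ∈ Finset.univ \ {i}, r i k) ^ 2 = 0 := by
  classical
  -- value of pd on generators
  have pdX : ∀ a b : Fin n, a ≠ b → ∀ j,
      pd a b (X j) = if j = a ∨ j = b then 1 else 0 := by
    intro a b hab j
    by_cases h1 : j = a
    · rw [h1]; simp [hpdi a b hab]
    by_cases h2 : j = b
    · rw [h2]; simp [hpdk a b hab]
    · simp [h1, h2, hpd0 a b j hab h1 h2]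
  -- pd kills 1
  have pd1 : ∀ a b : Fin n, a ≠ b → pd a b (1 : SkewPoly n) = 0 := by
    intro a b hab
    have h := hpdL a b hab 0 1 1 isHomog_one
    simp only [one_mul, mul_one, pow_zero, one_smul, map_one] at h
    have h' : pd a b 1 + 0 = pd a b 1 + pd a b 1 := by rw [add_zero]; exact h
    exact (add_left_cancel h').symm
  -- key recursion
  have pdXm : ∀ a b : Fin n, a ≠ b → ∀ (j : Fin n) (g : SkewPoly n),
      pd a b (X j * g)
        = (if j = a ∨ j = b then (1 : ℂ) else 0) • g
          - X (Equiv.swap a b j) * pd a b g := by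
    intro a b hab j g
    have h := hpdL a b hab 1 (X j) g (isHomog_X j)
    rw [hs a b j hab, pdX a b hab j] at h
    rw [h, pow_one]
    split_ifs with hc
    · rw [one_mul, one_smul]; module
    · rw [zero_mul, zero_smul]; module
  -- s on monomial products
  have sXm : ∀ c d : Fin n, c ≠ d → ∀ (j : Fin n) (g : SkewPoly n),
      s c d (X j * g) = X (Equiv.swap c d j) * s c d g := by
    intro c d hcd j g
    rw [map_mul, hs c d j hcd]
  -- s is an involution
  have sinv : ∀ c d : Fin n, c ≠ d → ∀ y, s c d (s c d y) = y := by
    intro c d hcd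
    have hcomp : (s c d).comp (s c d) = AlgHom.id ℂ (SkewPoly n) := by
      apply RingQuot.ringQuot_ext'
      apply FreeAlgebra.hom_ext
      funext j
      show ((s c d).comp (s c d)).comp (RingQuot.mkAlgHom ℂ (SkewRel n))
          (FreeAlgebra.ι ℂ j) = _
      simp only [AlgHom.comp_apply]
      rw [show RingQuot.mkAlgHom ℂ (SkewRel n) (FreeAlgebra.ι ℂ j) = X j from rfl,
        hs c d j hcd, hs c d _ hcd, Equiv.swap_apply_self]
      rfl
    intro y
    exact AlgHom.congr_fun hcomp y
  -- conjugation lemma: s ∘ pd ∘ s = pd of swapped indices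
  have conj : ∀ a b c d : Fin n, a ≠ b → c ≠ d →
      (s c d).toLinearMap ∘ₗ pd a b ∘ₗ (s c d).toLinearMap
        = pd (Equiv.swap c d a) (Equiv.swap c d b) := by
    intro a b c d hab hcd
    have hab' : Equiv.swap c d a ≠ Equiv.swap c d b :=
      fun h => hab ((Equiv.swap c d).injective h)
    apply unique_op
      (fun j => if j = Equiv.swap c d a ∨ j = Equiv.swap c d b then (1 : ℂ) else 0)
      (fun j => Equiv.swap (Equiv.swap c d a) (Equiv.swap c d b) j)
    · simp [pd1 a b hab]
    · simp [pd1 _ _ hab']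
    · intro j g
      simp only [LinearMap.comp_apply, AlgHom.toLinearMap_apply]
      rw [sXm c d hcd j g, pdXm a b hab, map_sub, map_smul, sinv c d hcd,
        map_mul, hs c d _ hcd]
      have hcond : (Equiv.swap c d j = a ∨ Equiv.swap c d j = b)
          ↔ (j = Equiv.swap c d a ∨ j = Equiv.swap c d b) := by
        constructor
        · rintro (h | h)
          · left; rw [← h, Equiv.swap_apply_self]
          · right; rw [← h, Equiv.swap_apply_self]
        · rintro (h | h)
          · left; rw [h, Equiv.swap_apply_self]
          · right; rw [h, Equiv.swap_apply_self]
      rw [swap_conj c d a b j]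
      congr 1
      by_cases hc : Equiv.swap c d j = a ∨ Equiv.swap c d j = b
      · rw [if_pos hc, if_pos (hcond.1 hc)]
      · rw [if_neg hc, if_neg (fun h => hc (hcond.2 h))]
    · intro j g
      exact pdXm _ _ hab' j g
  -- symmetry of pd
  have sym : ∀ a b : Fin n, a ≠ b → pd b a = pd a b := by
    intro a b hab
    apply unique_op (fun j => if j = a ∨ j = b then (1 : ℂ) else 0)
      (fun j => Equiv.swap a b j)
    · exact pd1 b a hab.symm
    · exact pd1 a b hab
    · intro j g
      rw [pdXm b a hab.symm j g, Equiv.swap_comm b a]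
      congr 2
      simp [or_comm]
    · intro j g
      exact pdXm a b hab j g
  -- pd squares to zero
  have pdsq : ∀ a b : Fin n, a ≠ b → pd a b ∘ₗ pd a b = 0 := by
    intro a b hab
    apply end_ext
    intro w
    induction w with
    | nil => simp [pd1 a b hab]
    | cons j w ih =>
      simp only [List.map_cons, List.prod_cons, LinearMap.comp_apply] at ih ⊢
      rw [pdXm a b hab, map_sub, map_smul, pdXm a b hab, Equiv.swap_apply_self]
      have hc : (Equiv.swap a b j = a ∨ Equiv.swap a b j = b) ↔ (j = a ∨ j = b) :=
        swap_cond a b j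
      by_cases h : j = a ∨ j = b
      · rw [if_pos h, if_pos (hc.2 h)]
        simp [ih]
      · rw [if_neg h, if_neg (fun hh => h (hc.1 hh))]
        simp [ih]
  -- two-step expansion
  have pd2 : ∀ a b c d : Fin n, a ≠ b → c ≠ d → ∀ (j : Fin n) (g : SkewPoly n),
      pd a b (pd c d (X j * g))
        = (if j = c ∨ j = d then pd a b g else 0)
          - (if Equiv.swap c d j = a ∨ Equiv.swap c d j = b then pd c d g else 0)
          + X (Equiv.swap a b (Equiv.swap c d j)) * pd a b (pd c d g) := by
    intro a b c d hab hcd j g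
    rw [pdXm c d hcd j g, map_sub, map_smul, pdXm a b hab]
    by_cases h : j = c ∨ j = d
    · rw [if_pos h, if_pos h]
      by_cases h2 : Equiv.swap c d j = a ∨ Equiv.swap c d j = b
      · rw [if_pos h2, if_pos h2]
        all_goals simp only [one_smul, zero_smul]
        all_goals abel
      · rw [if_neg h2, if_neg h2]
        all_goals simp only [one_smul, zero_smul]
        all_goals abel
    · rw [if_neg h, if_neg h]
      by_cases h2 : Equiv.swap c d j = a ∨ Equiv.swap c d j = b
      · rw [if_pos h2, if_pos h2]
        all_goals simp only [one_smul, zero_smul]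
        all_goals abel
      · rw [if_neg h2, if_neg h2]
        all_goals simp only [one_smul, zero_smul]
        all_goals abel
  -- THE TRIPLE IDENTITY
  have triple : ∀ i k l : Fin n, i ≠ k → k ≠ l → l ≠ i →
      pd i k ∘ₗ pd k l + pd k l ∘ₗ pd l i + pd l i ∘ₗ pd i k = 0 := by
    intro i k l hik hkl hli
    have hki := hik.symm
    have hlk := hkl.symm
    have hil := hli.symm
    apply end_ext
    intro w
    induction w with
    | nil =>
      simp [LinearMap.add_apply, LinearMap.comp_apply, pd1 i k hik, pd1 k l hkl,
        pd1 l i hli, pd1 i k, pd1 k l, pd1 l i]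
    | cons j w ih =>
      simp only [List.map_cons, List.prod_cons, LinearMap.add_apply,
        LinearMap.comp_apply] at ih ⊢
      set m := (List.map X w).prod with hm
      rw [pd2 i k k l hik hkl j m, pd2 k l l i hkl hli j m, pd2 l i i k hli hik j m]
      set A := pd i k (pd k l m) with hA
      set B := pd k l (pd l i m) with hB
      set C := pd l i (pd i k m) with hC
      by_cases hji : j = i
      · subst hji
        have hx : X k * A + X k * B + X k * C = 0 := by
          rw [← mul_add, ← mul_add, ih, mul_zero]
        rw [← hx]
        simp [Equiv.swap_apply_left, Equiv.swap_apply_right,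
          Equiv.swap_apply_of_ne_of_ne, hik, hkl, hli, hki, hlk, hil]
        all_goals abel
      by_cases hjk : j = k
      · subst hjk
        have hx : X l * A + X l * B + X l * C = 0 := by
          rw [← mul_add, ← mul_add, ih, mul_zero]
        rw [← hx]
        simp [Equiv.swap_apply_left, Equiv.swap_apply_right,
          Equiv.swap_apply_of_ne_of_ne, hik, hkl, hli, hki, hlk, hil]
        all_goals abel
      by_cases hjl : j = l
      · subst hjl
        have hx : X i * A + X i * B + X i * C = 0 := by
          rw [← mul_add, ← mul_add, ih, mul_zero]
        rw [← hx]
        simp [Equiv.swap_apply_left, Equiv.swap_apply_right,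
          Equiv.swap_apply_of_ne_of_ne, hik, hkl, hli, hki, hlk, hil]
        all_goals abel
      · have hx : X j * A + X j * B + X j * C = 0 := by
          rw [← mul_add, ← mul_add, ih, mul_zero]
        rw [← hx]
        simp [Equiv.swap_apply_of_ne_of_ne, hji, hjk, hjl, hik, hkl, hli, hki, hlk, hil]
        all_goals abel
  -- r i k squared is zero
  have rr : ∀ i k : Fin n, i ≠ k → r i k * r i k = 0 := by
    intro i k hik
    rw [hr i k hik]
    ext f
    simp only [Module.End.mul_apply, LinearMap.comp_apply, AlgHom.toLinearMap_apply,
      LinearMap.zero_apply]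
    have hc := conj i k i k hik hik
    have hc' : ∀ y, s i k (pd i k (s i k y)) = pd k i y := by
      intro y
      have := DFunLike.congr_fun hc y
      simpa [Equiv.swap_apply_left, Equiv.swap_apply_right] using this
    rw [hc' f, sym i k hik]
    have := DFunLike.congr_fun (pdsq i k hik) f
    simpa using this
  -- cross terms
  have cross : ∀ i k l : Fin n, i ≠ k → i ≠ l → k ≠ l →
      r i k * r i l = pd i k ∘ₗ pd k l ∘ₗ
        ((s i k).toLinearMap ∘ₗ (s i l).toLinearMap) := by
    intro i k l hik hil hkl
    rw [hr i k hik, hr i l hil]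
    ext f
    simp only [Module.End.mul_apply, LinearMap.comp_apply, AlgHom.toLinearMap_apply]
    have hc := conj i l i k hil hik
    have hc' : ∀ y, s i k (pd i l (s i k y)) = pd k l y := by
      intro y
      have := DFunLike.congr_fun hc y
      simpa [Equiv.swap_apply_left,
        Equiv.swap_apply_of_ne_of_ne (Ne.symm hil) (Ne.symm hkl)] using this
    have h2 : s i k (pd i l (s i l f)) = pd k l (s i k (s i l f)) := by
      have h3 := hc' (s i k (s i l f))
      rwa [sinv i k hik] at h3
    rw [h2]
  -- cyclic invariance of the swap composition
  have scyc : ∀ i k l : Fin n, i ≠ k → k ≠ l → l ≠ i →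
      (s i k).toLinearMap ∘ₗ (s i l).toLinearMap
        = (s k l).toLinearMap ∘ₗ (s k i).toLinearMap := by
    intro i k l hik hkl hli
    have hil := hli.symm
    have hki := hik.symm
    have hlk := hkl.symm
    have halg : (s i k).comp (s i l) = (s k l).comp (s k i) := by
      apply RingQuot.ringQuot_ext'
      apply FreeAlgebra.hom_ext
      funext j
      show ((s i k).comp (s i l)).comp (RingQuot.mkAlgHom ℂ (SkewRel n))
          (FreeAlgebra.ι ℂ j)
        = ((s k l).comp (s k i)).comp (RingQuot.mkAlgHom ℂ (SkewRel n))
          (FreeAlgebra.ι ℂ j)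
      simp only [AlgHom.comp_apply]
      rw [show RingQuot.mkAlgHom ℂ (SkewRel n) (FreeAlgebra.ι ℂ j) = X j from rfl,
        hs i l j hil, hs i k _ hik, hs k i j hki, hs k l _ hkl]
      congr 1
      by_cases hji : j = i
      · subst hji
        simp [Equiv.swap_apply_left, Equiv.swap_apply_right,
          Equiv.swap_apply_of_ne_of_ne, hik, hkl, hli, hki, hlk, hil]
      by_cases hjk : j = k
      · subst hjk
        simp [Equiv.swap_apply_left, Equiv.swap_apply_right,
          Equiv.swap_apply_of_ne_of_ne, hik, hkl, hli, hki, hlk, hil]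
      by_cases hjl : j = l
      · subst hjl
        simp [Equiv.swap_apply_left, Equiv.swap_apply_right,
          Equiv.swap_apply_of_ne_of_ne, hik, hkl, hli, hki, hlk, hil]
      · simp [Equiv.swap_apply_of_ne_of_ne, hji, hjk, hjl]
    calc (s i k).toLinearMap ∘ₗ (s i l).toLinearMap
        = ((s i k).comp (s i l)).toLinearMap := by rw [AlgHom.comp_toLinearMap]
      _ = ((s k l).comp (s k i)).toLinearMap := by rw [halg]
      _ = (s k l).toLinearMap ∘ₗ (s k i).toLinearMap := by rw [AlgHom.comp_toLinearMap]
  -- the triple-indexed operator family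
  set F : Fin n × Fin n × Fin n → Module.End ℂ (SkewPoly n) :=
    fun p => if p.1 ≠ p.2.1 ∧ p.2.1 ≠ p.2.2 ∧ p.2.2 ≠ p.1 then
      pd p.1 p.2.1 ∘ₗ pd p.2.1 p.2.2 ∘ₗ
        ((s p.1 p.2.1).toLinearMap ∘ₗ (s p.1 p.2.2).toLinearMap)
      else 0 with hF
  -- Step 1: the LHS equals the full triple sum
  have step1 : ∀ i : Fin n,
      (∑ k ∈ Finset.univ \ {i}, r i k) ^ 2 = ∑ k : Fin n, ∑ l : Fin n, F (i, k, l) := by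
    intro i
    rw [pow_two, Finset.sum_mul_sum]
    have hterm : ∀ k ∈ Finset.univ \ {i}, ∑ l ∈ Finset.univ \ {i}, r i k * r i l
        = ∑ l : Fin n, F (i, k, l) := by
      intro k hk
      simp only [Finset.mem_sdiff, Finset.mem_singleton, Finset.mem_univ,
        true_and] at hk
      have hik : i ≠ k := Ne.symm hk
      have hstep : ∀ l ∈ Finset.univ \ {i}, r i k * r i l = F (i, k, l) := by
        intro l hl
        simp only [Finset.mem_sdiff, Finset.mem_singleton, Finset.mem_univ,
          true_and] at hl
        have hil : i ≠ l := Ne.symm hl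
        by_cases hkl : k = l
        · subst hkl
          rw [rr i k hik, hF]
          simp only []
          rw [if_neg (by tauto)]
        · rw [cross i k l hik hil hkl, hF]
          simp only []
          rw [if_pos ⟨hik, hkl, hil.symm⟩]
      rw [Finset.sum_congr rfl hstep]
      apply Finset.sum_subset (Finset.sdiff_subset)
      intro l _ hl
      have hli : l = i := by
        by_contra hc
        exact hl (by simp [hc])
      subst hli
      rw [hF]
      simp only []
      rw [if_neg (by tauto)]
    rw [Finset.sum_congr rfl hterm]
    apply Finset.sum_subset (Finset.sdiff_subset)
    intro k _ hk
    have hki : k = i := by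
      by_contra hc
      exact hk (by simp [hc])
    subst hki
    apply Finset.sum_eq_zero
    intro l _
    rw [hF]
    simp only []
    rw [if_neg (by tauto)]
  -- the cyclic rotation
  set ρ : (Fin n × Fin n × Fin n) ≃ (Fin n × Fin n × Fin n) :=
    ⟨fun p => (p.2.1, p.2.2, p.1), fun p => (p.2.2, p.1, p.2.1),
      fun p => rfl, fun p => rfl⟩ with hρ
  have key : ∀ p, F p + F (ρ p) + F (ρ (ρ p)) = 0 := by
    rintro ⟨i, k, l⟩
    have hρ1 : ρ (i, k, l) = (k, l, i) := rfl
    have hρ2 : ρ (ρ (i, k, l)) = (l, i, k) := rfl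
    rw [hρ2, hρ1]
    by_cases h : i ≠ k ∧ k ≠ l ∧ l ≠ i
    · obtain ⟨hik, hkl, hli⟩ := h
      rw [hF]
      simp only []
      rw [if_pos ⟨hik, hkl, hli⟩, if_pos ⟨hkl, hli, hik⟩, if_pos ⟨hli, hik, hkl⟩]
      rw [show (s k l).toLinearMap ∘ₗ (s k i).toLinearMap
          = (s i k).toLinearMap ∘ₗ (s i l).toLinearMap from (scyc i k l hik hkl hli).symm]
      rw [show (s l i).toLinearMap ∘ₗ (s l k).toLinearMap
          = (s i k).toLinearMap ∘ₗ (s i l).toLinearMap from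
        ((scyc i k l hik hkl hli).trans (scyc k l i hkl hli hik)).symm]
      have ht := triple i k l hik hkl hli
      ext f
      simp only [LinearMap.add_apply, LinearMap.comp_apply, AlgHom.toLinearMap_apply,
        LinearMap.zero_apply]
      have htf := DFunLike.congr_fun ht (s i k (s i l f))
      simpa using htf
    · rw [hF]
      simp only []
      rw [if_neg h, if_neg (by tauto), if_neg (by tauto)]
      simp
  have hsum : ∑ p : Fin n × Fin n × Fin n, F p = 0 := by
    have e2 : ∑ p : Fin n × Fin n × Fin n, F (ρ p) = ∑ p : Fin n × Fin n × Fin n, F p :=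
      Equiv.sum_comp ρ F
    have e3 : ∑ p : Fin n × Fin n × Fin n, F (ρ (ρ p))
        = ∑ p : Fin n × Fin n × Fin n, F p := by
      calc ∑ p : Fin n × Fin n × Fin n, F (ρ (ρ p))
          = ∑ p : Fin n × Fin n × Fin n, F (ρ p) := Equiv.sum_comp ρ fun q => F (ρ q)
        _ = ∑ p : Fin n × Fin n × Fin n, F p := e2
    have hz : ∑ p : Fin n × Fin n × Fin n, (F p + F (ρ p) + F (ρ (ρ p))) = 0 :=
      Finset.sum_eq_zero fun p _ => key p
    rw [Finset.sum_add_distrib, Finset.sum_add_distrib, e2, e3] at hz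
    have h3 : (3 : ℂ) • (∑ p : Fin n × Fin n × Fin n, F p) = 0 := by
      rw [show (3 : ℂ) = 1 + 1 + 1 by norm_num, add_smul, add_smul, one_smul]
      exact hz
    exact (smul_eq_zero.mp h3).resolve_left (by norm_num)
  calc ∑ i : Fin n, (∑ k ∈ Finset.univ \ {i}, r i k) ^ 2
      = ∑ i : Fin n, ∑ k : Fin n, ∑ l : Fin n, F (i, k, l) :=
        Finset.sum_congr rfl fun i _ => step1 i
    _ = ∑ p : Fin n × Fin n × Fin n, F p := by
        rw [Fintype.sum_prod_type F]
        exact Finset.sum_congr rfl fun i _ =>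
          (Fintype.sum_prod_type fun q => F (i, q)).symm
    _ = 0 := hsum
end
end

section
/- The relation Σ_{i=1}^n (A_i B_i + B_i A_i) = 0 holds as an identity of operators on the skew Laurent polynomial ring P⁻ₗ. -/
noncomputable section

/-- The defining relations of the skew Laurent polynomial ring `P⁻ₗ`: the generators indexed by
`Sum.inl i` are the `xᵢ` and those indexed by `Sum.inr i` are the `xᵢ⁻¹`; generators with distinct
underlying indices anticommute, and `xᵢ xᵢ⁻¹ = xᵢ⁻¹ xᵢ = 1`. -/
inductive SkewLRel (n : ℕ) :
    FreeAlgebra ℂ (Fin n ⊕ Fin n) → FreeAlgebra ℂ (Fin n ⊕ Fin n) → Prop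
  | anticomm (a b : Fin n ⊕ Fin n) (h : Sum.elim id id a ≠ Sum.elim id id b) :
      SkewLRel n (FreeAlgebra.ι ℂ a * FreeAlgebra.ι ℂ b)
        (-(FreeAlgebra.ι ℂ b * FreeAlgebra.ι ℂ a))
  | mulInv (i : Fin n) :
      SkewLRel n (FreeAlgebra.ι ℂ (Sum.inl i) * FreeAlgebra.ι ℂ (Sum.inr i)) 1
  | invMul (i : Fin n) :
      SkewLRel n (FreeAlgebra.ι ℂ (Sum.inr i) * FreeAlgebra.ι ℂ (Sum.inl i)) 1

/-- The skew Laurent polynomial ring `P⁻ₗ`. -/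
abbrev SkewLaurent (n : ℕ) := RingQuot (SkewLRel n)

/-- The generator `xᵢ` of `P⁻ₗ`. -/
def XL {n : ℕ} (i : Fin n) : SkewLaurent n :=
  RingQuot.mkAlgHom ℂ (SkewLRel n) (FreeAlgebra.ι ℂ (Sum.inl i))

/-- The generator `xᵢ⁻¹` of `P⁻ₗ`. -/
def XLinv {n : ℕ} (i : Fin n) : SkewLaurent n :=
  RingQuot.mkAlgHom ℂ (SkewLRel n) (FreeAlgebra.ι ℂ (Sum.inr i))

/-- The generators of `P⁻ₗ`, as a family indexed by `Fin n ⊕ Fin n`. -/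
def genL {n : ℕ} : Fin n ⊕ Fin n → SkewLaurent n := Sum.elim XL XLinv

/-- The (ℤ-valued) degree of a word in the generators of `P⁻ₗ`: each `xᵢ` counts `+1` and each
`xᵢ⁻¹` counts `−1`. -/
def degL {n : ℕ} (w : List (Fin n ⊕ Fin n)) : ℤ :=
  (w.map (Sum.elim (fun _ => (1 : ℤ)) fun _ => (-1 : ℤ))).sum

/-- `f ∈ P⁻ₗ` is homogeneous of degree `d ∈ ℤ`. -/
def IsHomogL {n : ℕ} (d : ℤ) (f : SkewLaurent n) : Prop :=
  f ∈ Submodule.span ℂ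
    {m : SkewLaurent n | ∃ w : List (Fin n ⊕ Fin n), degL w = d ∧ m = (w.map genL).prod}

/-- The operator of left multiplication by `xᵢ⁻¹` on `P⁻ₗ`. -/
def mulXLinv {n : ℕ} (i : Fin n) : Module.End ℂ (SkewLaurent n) :=
  LinearMap.mulLeft ℂ (XLinv i)

set_option maxHeartbeats 1600000

/-- The relation `Σᵢ (AᵢBᵢ + BᵢAᵢ) = 0` as operators on the skew Laurent polynomial ring. -/
theorem stmt9 (n : ℕ) (hn : 2 ≤ n)
    -- `s i k` is the algebra automorphism of `P⁻ₗ` swapping `xᵢ` and `x_k` (and `xᵢ⁻¹`, `x_k⁻¹`)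
    (s : Fin n → Fin n → (SkewLaurent n →ₐ[ℂ] SkewLaurent n))
    (hs : ∀ i k j : Fin n, i ≠ k → s i k (XL j) = XL (Equiv.swap i k j))
    (hs' : ∀ i k j : Fin n, i ≠ k → s i k (XLinv j) = XLinv (Equiv.swap i k j))
    -- `τ i` is the algebra automorphism sending `xᵢ` to `-xᵢ` (hence `xᵢ⁻¹` to `-xᵢ⁻¹`)
    (τ : Fin n → (SkewLaurent n →ₐ[ℂ] SkewLaurent n))
    (hτ : ∀ i j : Fin n, τ i (XL j) = if j = i then -XL j else XL j)
    (hτ' : ∀ i j : Fin n, τ i (XLinv j) = if j = i then -XLinv j else XLinv j)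
    -- `pd i k` is the extension to `P⁻ₗ` of the odd divided difference operator `∂_{i,k}`
    (pd : Fin n → Fin n → Module.End ℂ (SkewLaurent n))
    (hpdi : ∀ i k : Fin n, i ≠ k → pd i k (XL i) = 1)
    (hpdk : ∀ i k : Fin n, i ≠ k → pd i k (XL k) = 1)
    (hpd0 : ∀ i k j : Fin n, i ≠ k → j ≠ i → j ≠ k → pd i k (XL j) = 0)
    (hpdL : ∀ i k : Fin n, i ≠ k → ∀ (d : ℤ) (f g : SkewLaurent n), IsHomogL d f →
      pd i k (f * g) = pd i k f * g + (-1 : ℂ) ^ d • (s i k f * pd i k g))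
    -- `r i k = ∂_{i,k} ∘ s_{i,k}`
    (r : Fin n → Fin n → Module.End ℂ (SkewLaurent n))
    (hr : ∀ i k : Fin n, i ≠ k → r i k = pd i k ∘ₗ (s i k).toLinearMap)
    -- `A i = (2xᵢ)⁻¹(1 − τᵢ)` and `B i = Σ_{k ≠ i} r_{i,k}`
    (A B : Fin n → Module.End ℂ (SkewLaurent n))
    (hA : ∀ i : Fin n, A i = (2 : ℂ)⁻¹ • (mulXLinv i * (1 - (τ i).toLinearMap)))
    (hB : ∀ i : Fin n, B i = ∑ k ∈ Finset.univ \ {i}, r i k)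
 :
    ∑ i : Fin n, (A i * B i + B i * A i) = 0 := by
  classical
  have negmul : ∀ x y : SkewLaurent n, -x * y = -(x * y) := fun x y => neg_mul x y
  have mulneg : ∀ x y : SkewLaurent n, x * -y = -(x * y) := fun x y => mul_neg x y
  have negsmul : ∀ x : SkewLaurent n, (-1 : ℂ) • x = -x := fun x => neg_one_smul ℂ x
  -- § generators
  have hgen : ∀ a : Fin n ⊕ Fin n,
      genL a = RingQuot.mkAlgHom ℂ (SkewLRel n) (FreeAlgebra.ι ℂ a) := by
    rintro (i | i) <;> rfl
  -- § ring relations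
  have hanti0 : ∀ a b : Fin n ⊕ Fin n, Sum.elim id id a ≠ Sum.elim id id b →
      genL a * genL b = -(genL b * genL a) := by
    intro a b h
    have h1 := RingQuot.mkAlgHom_rel ℂ (SkewLRel.anticomm a b h)
    simp only [map_mul, map_neg] at h1
    rw [hgen a, hgen b]
    exact h1
  have hanti : ∀ a b : Fin n ⊕ Fin n, Sum.elim id id a ≠ Sum.elim id id b →
      ∀ u : SkewLaurent n, genL a * (genL b * u) = -(genL b * (genL a * u)) := by
    intro a b h u
    rw [← mul_assoc, hanti0 a b h, negmul, mul_assoc]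
  have hXXinv : ∀ i : Fin n, XL i * XLinv i = 1 := by
    intro i
    have h1 := RingQuot.mkAlgHom_rel ℂ (SkewLRel.mulInv i)
    simp only [map_mul, map_one] at h1
    exact h1
  have hXinvX : ∀ i : Fin n, XLinv i * XL i = 1 := by
    intro i
    have h1 := RingQuot.mkAlgHom_rel ℂ (SkewLRel.invMul i)
    simp only [map_mul, map_one] at h1
    exact h1
  have cXXinv : ∀ (i : Fin n) (u : SkewLaurent n), XL i * (XLinv i * u) = u := by
    intro i u; rw [← mul_assoc, hXXinv, one_mul]
  have cXinvX : ∀ (i : Fin n) (u : SkewLaurent n), XLinv i * (XL i * u) = u := by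
    intro i u; rw [← mul_assoc, hXinvX, one_mul]
  have aIX : ∀ i j : Fin n, i ≠ j → ∀ u : SkewLaurent n,
      XLinv i * (XL j * u) = -(XL j * (XLinv i * u)) := by
    intro i j h u
    simpa [genL] using hanti (Sum.inr i) (Sum.inl j) (by simpa using h) u
  have aII : ∀ i j : Fin n, i ≠ j → ∀ u : SkewLaurent n,
      XLinv i * (XLinv j * u) = -(XLinv j * (XLinv i * u)) := by
    intro i j h u
    simpa [genL] using hanti (Sum.inr i) (Sum.inr j) (by simpa using h) u
  -- § homogeneity of generators
  have homX : ∀ j : Fin n, IsHomogL 1 (XL j) := fun j =>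
    Submodule.subset_span ⟨[Sum.inl j], by simp [degL], by simp [genL]⟩
  have homXinv : ∀ j : Fin n, IsHomogL (-1) (XLinv j) := fun j =>
    Submodule.subset_span ⟨[Sum.inr j], by simp [degL], by simp [genL]⟩
  have hom1 : IsHomogL 0 (1 : SkewLaurent n) :=
    Submodule.subset_span ⟨[], by simp [degL], by simp⟩
  -- § pd basics
  have pdX : ∀ i k : Fin n, i ≠ k → ∀ (j : Fin n) (u : SkewLaurent n),
      pd i k (XL j * u) = pd i k (XL j) * u - XL (Equiv.swap i k j) * pd i k u := by
    intro i k h j u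
    rw [hpdL i k h 1 (XL j) u (homX j), hs i k j h, zpow_one, negsmul, ← sub_eq_add_neg]
  have pdXinv : ∀ i k : Fin n, i ≠ k → ∀ (j : Fin n) (u : SkewLaurent n),
      pd i k (XLinv j * u) = pd i k (XLinv j) * u - XLinv (Equiv.swap i k j) * pd i k u := by
    intro i k h j u
    have hz : ((-1 : ℂ)) ^ (-1 : ℤ) = -1 := by
      rw [zpow_neg, zpow_one, inv_neg, inv_one]
    rw [hpdL i k h (-1) (XLinv j) u (homXinv j), hs' i k j h, hz, negsmul, ← sub_eq_add_neg]
  have pd1 : ∀ i k : Fin n, i ≠ k → pd i k (1 : SkewLaurent n) = 0 := by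
    intro i k h
    have h1 := hpdL i k h 0 1 1 hom1
    simp only [mul_one, one_mul, zpow_zero, one_smul, map_one] at h1
    exact (left_eq_add.mp h1)
  have pdIi : ∀ i k : Fin n, i ≠ k → pd i k (XLinv i) = XLinv k * XLinv i := by
    intro i k h
    have h1 := pdX i k h i (XLinv i)
    rw [hXXinv i, pd1 i k h, hpdi i k h, one_mul, Equiv.swap_apply_left] at h1
    have h2 : XL k * pd i k (XLinv i) = XLinv i := (sub_eq_zero.mp h1.symm).symm
    calc pd i k (XLinv i) = XLinv k * (XL k * pd i k (XLinv i)) := (cXinvX k _).symm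
      _ = XLinv k * XLinv i := by rw [h2]
  have pdIk : ∀ i k : Fin n, i ≠ k → pd i k (XLinv k) = XLinv i * XLinv k := by
    intro i k h
    have h1 := pdX i k h k (XLinv k)
    rw [hXXinv k, pd1 i k h, hpdk i k h, one_mul, Equiv.swap_apply_right] at h1
    have h2 : XL i * pd i k (XLinv k) = XLinv k := (sub_eq_zero.mp h1.symm).symm
    calc pd i k (XLinv k) = XLinv i * (XL i * pd i k (XLinv k)) := (cXinvX i _).symm
      _ = XLinv i * XLinv k := by rw [h2]
  have pdI0 : ∀ i k j : Fin n, i ≠ k → j ≠ i → j ≠ k → pd i k (XLinv j) = 0 := by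
    intro i k j h hji hjk
    have h1 := pdX i k h j (XLinv j)
    rw [hXXinv j, pd1 i k h, hpd0 i k j h hji hjk, zero_mul,
      Equiv.swap_apply_of_ne_of_ne hji hjk] at h1
    have h2 : XL j * pd i k (XLinv j) = 0 := by
      have h3 := h1.symm
      rw [zero_sub] at h3
      exact neg_eq_zero.mp h3
    calc pd i k (XLinv j) = XLinv j * (XL j * pd i k (XLinv j)) := (cXinvX j _).symm
      _ = 0 := by rw [h2, mul_zero]
  -- § algebra-hom extensionality
  have hext : ∀ f g : SkewLaurent n →ₐ[ℂ] SkewLaurent n,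
      (∀ j, f (XL j) = g (XL j)) → (∀ j, f (XLinv j) = g (XLinv j)) → ∀ u, f u = g u := by
    intro f g h1 h2 u
    obtain ⟨y, rfl⟩ := RingQuot.mkAlgHom_surjective ℂ (SkewLRel n) u
    have h3 : f.comp (RingQuot.mkAlgHom ℂ (SkewLRel n))
        = g.comp (RingQuot.mkAlgHom ℂ (SkewLRel n)) := by
      apply FreeAlgebra.hom_ext
      funext a
      rcases a with i | i
      · exact h1 i
      · exact h2 i
    exact DFunLike.congr_fun h3 y
  have ssf : ∀ i j : Fin n, i ≠ j → ∀ u, s i j u = s j i u := by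
    intro i j h
    apply hext
    · intro m; rw [hs i j m h, hs j i m h.symm, Equiv.swap_comm]
    · intro m; rw [hs' i j m h, hs' j i m h.symm, Equiv.swap_comm]
  have tsc : ∀ i j : Fin n, i ≠ j → ∀ u, τ i (s i j u) = s i j (τ j u) := by
    intro i j h u
    refine hext ((τ i).comp (s i j)) ((s i j).comp (τ j)) (fun m => ?_) (fun m => ?_) u
    · simp only [AlgHom.comp_apply, hτ j]
      by_cases hm : m = j
      · have hsw : Equiv.swap i j m = i := by rw [hm]; exact Equiv.swap_apply_right i j
        rw [if_pos hm, map_neg, hs i j m h, hτ i, if_pos hsw]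
      · have hni : Equiv.swap i j m ≠ i := fun hcon =>
          hm ((Equiv.swap i j).injective (hcon.trans (Equiv.swap_apply_right i j).symm))
        rw [if_neg hm, hs i j m h, hτ i, if_neg hni]
    · simp only [AlgHom.comp_apply, hτ' j]
      by_cases hm : m = j
      · have hsw : Equiv.swap i j m = i := by rw [hm]; exact Equiv.swap_apply_right i j
        rw [if_pos hm, map_neg, hs' i j m h, hτ' i, if_pos hsw]
      · have hni : Equiv.swap i j m ≠ i := fun hcon =>
          hm ((Equiv.swap i j).injective (hcon.trans (Equiv.swap_apply_right i j).symm))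
        rw [if_neg hm, hs' i j m h, hτ' i, if_neg hni]
  have sτ : ∀ i j : Fin n, i ≠ j → ∀ u, s i j (τ i u) = τ j (s i j u) := by
    intro i j h u
    have h1 := tsc j i h.symm u
    rw [← ssf i j h u, ← ssf i j h (τ i u)] at h1
    exact h1.symm
  -- § the operators P and Q
  set P : Fin n → SkewLaurent n → SkewLaurent n := fun i u => (2:ℂ)⁻¹ • (u - τ i u) with hPdef
  set Q : Fin n → SkewLaurent n → SkewLaurent n := fun i u => (2:ℂ)⁻¹ • (u + τ i u) with hQdef
  have hPQ : ∀ (i : Fin n) (u : SkewLaurent n), Q i u + P i u = u := by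
    intro i u
    simp only [hPdef, hQdef]
    rw [← smul_add]
    have h2 : (u + τ i u) + (u - τ i u) = (2:ℂ) • u := by
      rw [two_smul]; abel
    rw [h2, smul_smul]
    norm_num
  have tmulX : ∀ i j : Fin n, j ≠ i → ∀ u, τ i (XL j * u) = XL j * τ i u := by
    intro i j h u; rw [map_mul, hτ i j, if_neg h]
  have tmulXi : ∀ (i : Fin n) (u : SkewLaurent n), τ i (XL i * u) = -(XL i * τ i u) := by
    intro i u; rw [map_mul, hτ i i, if_pos rfl, negmul]
  have tmulI : ∀ i j : Fin n, j ≠ i → ∀ u, τ i (XLinv j * u) = XLinv j * τ i u := by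
    intro i j h u; rw [map_mul, hτ' i j, if_neg h]
  have tmulIi : ∀ (i : Fin n) (u : SkewLaurent n), τ i (XLinv i * u) = -(XLinv i * τ i u) := by
    intro i u; rw [map_mul, hτ' i i, if_pos rfl, negmul]
  have PmulX : ∀ i j : Fin n, j ≠ i → ∀ u, P i (XL j * u) = XL j * P i u := by
    intro i j h u
    simp only [hPdef]
    rw [tmulX i j h, ← mul_sub, mul_smul_comm]
  have PmulI : ∀ i j : Fin n, j ≠ i → ∀ u, P i (XLinv j * u) = XLinv j * P i u := by
    intro i j h u
    simp only [hPdef]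
    rw [tmulI i j h, ← mul_sub, mul_smul_comm]
  have PmulXi : ∀ (i : Fin n) (u : SkewLaurent n), P i (XL i * u) = XL i * Q i u := by
    intro i u
    simp only [hPdef, hQdef]
    rw [tmulXi i u, sub_neg_eq_add, ← mul_add, mul_smul_comm]
  have PmulIi : ∀ (i : Fin n) (u : SkewLaurent n), P i (XLinv i * u) = XLinv i * Q i u := by
    intro i u
    simp only [hPdef, hQdef]
    rw [tmulIi i u, sub_neg_eq_add, ← mul_add, mul_smul_comm]
  have QmulI : ∀ i j : Fin n, j ≠ i → ∀ u, Q i (XLinv j * u) = XLinv j * Q i u := by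
    intro i j h u
    simp only [hQdef]
    rw [tmulI i j h, ← mul_add, mul_smul_comm]
  have sP : ∀ i j : Fin n, i ≠ j → ∀ u, s i j (P i u) = P j (s i j u) := by
    intro i j h u
    simp only [hPdef]
    rw [map_smul, map_sub, sτ i j h u]
  have sQ : ∀ i j : Fin n, i ≠ j → ∀ u, s i j (Q i u) = Q j (s i j u) := by
    intro i j h u
    simp only [hQdef]
    rw [map_smul, map_add, sτ i j h u]
  -- § the operator A
  have hAapp : ∀ (i : Fin n) (u : SkewLaurent n), A i u = XLinv i * P i u := by
    intro i u
    rw [hA i]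
    simp only [LinearMap.smul_apply, Module.End.mul_apply, LinearMap.sub_apply,
      Module.End.one_apply, AlgHom.toLinearMap_apply, mulXLinv, LinearMap.mulLeft_apply, hPdef]
    rw [mul_smul_comm]
  have hXA : ∀ (i : Fin n) (u : SkewLaurent n), XL i * A i u = P i u := by
    intro i u; rw [hAapp, cXXinv]
  have hA1 : ∀ i j : Fin n, j ≠ i → ∀ u, A i (XL j * u) = -(XL j * A i u) := by
    intro i j h u
    rw [hAapp i (XL j * u), hAapp i u, PmulX i j h, aIX i j (Ne.symm h)]
  have hA1' : ∀ i j : Fin n, j ≠ i → ∀ u, A i (XLinv j * u) = -(XLinv j * A i u) := by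
    intro i j h u
    rw [hAapp i (XLinv j * u), hAapp i u, PmulI i j h, aII i j (Ne.symm h)]
  have hA2 : ∀ (i : Fin n) (u : SkewLaurent n), A i (XL i * u) = Q i u := by
    intro i u; rw [hAapp, PmulXi, cXinvX]
  have hA3 : ∀ (i : Fin n) (u : SkewLaurent n),
      A i (XLinv i * u) = XLinv i * (XLinv i * Q i u) := by
    intro i u; rw [hAapp, PmulIi]
  have sA : ∀ i j : Fin n, i ≠ j → ∀ u, s i j (A i u) = A j (s i j u) := by
    intro i j h u
    rw [hAapp i u, hAapp j (s i j u), map_mul, hs' i j i h, Equiv.swap_apply_left, sP i j h]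
  -- § s on products
  have smulX : ∀ i k : Fin n, i ≠ k → ∀ (j : Fin n) u,
      s i k (XL j * u) = XL (Equiv.swap i k j) * s i k u := by
    intro i k h j u; rw [map_mul, hs i k j h]
  have smulI : ∀ i k : Fin n, i ≠ k → ∀ (j : Fin n) u,
      s i k (XLinv j * u) = XLinv (Equiv.swap i k j) * s i k u := by
    intro i k h j u; rw [map_mul, hs' i k j h]
  -- § the operators r
  have hrapp : ∀ i k : Fin n, i ≠ k → ∀ u, r i k u = pd i k (s i k u) := by
    intro i k h u; rw [hr i k h]; rfl
  have hr_j : ∀ i k j : Fin n, i ≠ k → j ≠ i → j ≠ k → ∀ u,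
      r i k (XL j * u) = -(XL j * r i k u) := by
    intro i k j h hji hjk u
    rw [hrapp i k h, smulX i k h, Equiv.swap_apply_of_ne_of_ne hji hjk, pdX i k h,
      hpd0 i k j h hji hjk, zero_mul, Equiv.swap_apply_of_ne_of_ne hji hjk, zero_sub,
      ← hrapp i k h]
  have hr_j' : ∀ i k j : Fin n, i ≠ k → j ≠ i → j ≠ k → ∀ u,
      r i k (XLinv j * u) = -(XLinv j * r i k u) := by
    intro i k j h hji hjk u
    rw [hrapp i k h, smulI i k h, Equiv.swap_apply_of_ne_of_ne hji hjk, pdXinv i k h,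
      pdI0 i k j h hji hjk, zero_mul, Equiv.swap_apply_of_ne_of_ne hji hjk, zero_sub,
      ← hrapp i k h]
  have hr_i : ∀ i k : Fin n, i ≠ k → ∀ u,
      r i k (XL i * u) = s i k u - XL i * r i k u := by
    intro i k h u
    rw [hrapp i k h, smulX i k h, Equiv.swap_apply_left, pdX i k h, hpdk i k h, one_mul,
      Equiv.swap_apply_right, ← hrapp i k h]
  have hr_k : ∀ i k : Fin n, i ≠ k → ∀ u,
      r i k (XL k * u) = s i k u - XL k * r i k u := by
    intro i k h u
    rw [hrapp i k h, smulX i k h, Equiv.swap_apply_right, pdX i k h, hpdi i k h, one_mul,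
      Equiv.swap_apply_left, ← hrapp i k h]
  have hr_i' : ∀ i k : Fin n, i ≠ k → ∀ u,
      r i k (XLinv i * u) = XLinv i * (XLinv k * s i k u) - XLinv i * r i k u := by
    intro i k h u
    rw [hrapp i k h, smulI i k h, Equiv.swap_apply_left, pdXinv i k h, pdIk i k h,
      Equiv.swap_apply_right, mul_assoc, ← hrapp i k h]
  have hr_k' : ∀ i k : Fin n, i ≠ k → ∀ u,
      r i k (XLinv k * u) = XLinv k * (XLinv i * s i k u) - XLinv k * r i k u := by
    intro i k h u
    rw [hrapp i k h, smulI i k h, Equiv.swap_apply_right, pdXinv i k h, pdIi i k h,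
      Equiv.swap_apply_left, mul_assoc, ← hrapp i k h]
  -- § the operator B
  have hBapp : ∀ (i : Fin n) (u : SkewLaurent n),
      B i u = ∑ k ∈ Finset.univ \ {i}, r i k u := by
    intro i u; rw [hB i]; exact LinearMap.sum_apply _ _ _
  have hmem : ∀ i k : Fin n, k ∈ Finset.univ \ {i} → k ≠ i := by
    intro i k hk
    simpa using hk
  have hmem' : ∀ i k : Fin n, k ≠ i → k ∈ Finset.univ \ {i} := by
    intro i k hk
    simp [hk]
  have hB1 : ∀ i j : Fin n, j ≠ i → ∀ u,
      B i (XL j * u) = s i j u - XL j * B i u := by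
    intro i j hji u
    have hjS : j ∈ Finset.univ \ {i} := hmem' i j hji
    rw [hBapp i (XL j * u), hBapp i u,
      Finset.sum_eq_sum_sdiff_singleton_add hjS (fun k => r i k (XL j * u)),
      Finset.sum_eq_sum_sdiff_singleton_add hjS (fun k => r i k u)]
    have e1 : ∀ k ∈ (Finset.univ \ {i}) \ {j}, r i k (XL j * u) = -(XL j * r i k u) := by
      intro k hk
      rw [Finset.mem_sdiff, Finset.mem_singleton] at hk
      exact hr_j i k j (Ne.symm (hmem i k hk.1)) hji (Ne.symm hk.2) u
    rw [Finset.sum_congr rfl e1, hr_k i j (Ne.symm hji) u, Finset.sum_neg_distrib,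
      ← Finset.mul_sum, mul_add]
    abel
  have hB1' : ∀ i j : Fin n, j ≠ i → ∀ u,
      B i (XLinv j * u) = XLinv j * (XLinv i * s i j u) - XLinv j * B i u := by
    intro i j hji u
    have hjS : j ∈ Finset.univ \ {i} := hmem' i j hji
    rw [hBapp i (XLinv j * u), hBapp i u,
      Finset.sum_eq_sum_sdiff_singleton_add hjS (fun k => r i k (XLinv j * u)),
      Finset.sum_eq_sum_sdiff_singleton_add hjS (fun k => r i k u)]
    have e1 : ∀ k ∈ (Finset.univ \ {i}) \ {j}, r i k (XLinv j * u) = -(XLinv j * r i k u) := by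
      intro k hk
      rw [Finset.mem_sdiff, Finset.mem_singleton] at hk
      exact hr_j' i k j (Ne.symm (hmem i k hk.1)) hji (Ne.symm hk.2) u
    rw [Finset.sum_congr rfl e1, hr_k' i j (Ne.symm hji) u, Finset.sum_neg_distrib,
      ← Finset.mul_sum, mul_add]
    abel
  have hB2 : ∀ (i : Fin n) (u : SkewLaurent n),
      B i (XL i * u) = (∑ k ∈ Finset.univ \ {i}, s i k u) - XL i * B i u := by
    intro i u
    rw [hBapp i (XL i * u), hBapp i u,
      Finset.sum_congr rfl (fun k hk => hr_i i k (Ne.symm (hmem i k hk)) u),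
      Finset.sum_sub_distrib, ← Finset.mul_sum]
  have hB2' : ∀ (i : Fin n) (u : SkewLaurent n),
      B i (XLinv i * u)
        = (∑ k ∈ Finset.univ \ {i}, XLinv i * (XLinv k * s i k u)) - XLinv i * B i u := by
    intro i u
    rw [hBapp i (XLinv i * u), hBapp i u,
      Finset.sum_congr rfl (fun k hk => hr_i' i k (Ne.symm (hmem i k hk)) u),
      Finset.sum_sub_distrib]
    congr 1
    exact (Finset.mul_sum _ _ _).symm
  -- § main commutation: multiplication by a positive generator
  have step1 : ∀ (j : Fin n) (u : SkewLaurent n),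
      (∑ i : Fin n, (A i (B i (XL j * u)) + B i (A i (XL j * u)))) =
        XL j * ∑ i : Fin n, (A i (B i u) + B i (A i u)) := by
    intro j u
    rw [Finset.sum_eq_sum_sdiff_singleton_add (Finset.mem_univ j)
        (fun i => A i (B i (XL j * u)) + B i (A i (XL j * u))),
      Finset.sum_eq_sum_sdiff_singleton_add (Finset.mem_univ j)
        (fun i => A i (B i u) + B i (A i u))]
    have e1 : ∀ i ∈ Finset.univ \ {j}, A i (B i (XL j * u)) + B i (A i (XL j * u))
        = XL j * (A i (B i u) + B i (A i u)) + (s j i (A j u) - s j i (A i u)) := by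
      intro i hi
      have hij : i ≠ j := hmem j i hi
      have hji : j ≠ i := hij.symm
      have eA : A i (B i (XL j * u)) = s j i (A j u) + XL j * A i (B i u) := by
        rw [hB1 i j hji u, map_sub, hA1 i j hji (B i u)]
        have h4 : A i (s i j u) = s j i (A j u) := by
          rw [← ssf j i hji u]
          exact (sA j i hji u).symm
        rw [h4, sub_neg_eq_add]
      have eB : B i (A i (XL j * u)) = XL j * B i (A i u) - s j i (A i u) := by
        rw [hA1 i j hji u, map_neg, hB1 i j hji (A i u), ← ssf j i hji (A i u)]
        abel
      rw [eA, eB, mul_add]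
      abel
    rw [Finset.sum_congr rfl e1, Finset.sum_add_distrib, Finset.sum_sub_distrib,
      ← Finset.mul_sum]
    have eAj : A j (B j (XL j * u))
        = (∑ k ∈ Finset.univ \ {j}, s j k (A k u)) - Q j (B j u) := by
      rw [hB2 j u, map_sub, map_sum, hA2 j (B j u)]
      congr 1
      refine Finset.sum_congr rfl fun k hk => ?_
      have hkj : k ≠ j := hmem j k hk
      rw [← ssf k j hkj u, ← sA k j hkj u, ssf k j hkj (A k u)]
    have eBj : B j (A j (XL j * u)) = B j (Q j u) := by rw [hA2 j u]
    have eRj : XL j * (A j (B j u) + B j (A j u))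
        = P j (B j u) + ((∑ k ∈ Finset.univ \ {j}, s j k (A j u)) - B j (P j u)) := by
      have hXB : XL j * B j (A j u)
          = (∑ k ∈ Finset.univ \ {j}, s j k (A j u)) - B j (XL j * A j u) := by
        rw [hB2 j (A j u)]; abel
      rw [mul_add, hXA j (B j u), hXB, hXA j u]
    rw [eAj, eBj, mul_add _ (∑ i ∈ Finset.univ \ {j}, (A i (B i u) + B i (A i u))) _, eRj]
    have eQB : Q j (B j u) = B j u - P j (B j u) := eq_sub_of_add_eq (hPQ j (B j u))
    have eBQ : B j (Q j u) = B j u - B j (P j u) := by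
      have h7 : B j (Q j u) + B j (P j u) = B j u := by rw [← map_add, hPQ j u]
      exact eq_sub_of_add_eq h7
    rw [eQB, eBQ]
    abel
  -- § main commutation: multiplication by an inverse generator
  have step2 : ∀ (j : Fin n) (u : SkewLaurent n),
      (∑ i : Fin n, (A i (B i (XLinv j * u)) + B i (A i (XLinv j * u)))) =
        XLinv j * ∑ i : Fin n, (A i (B i u) + B i (A i u)) := by
    intro j u
    rw [Finset.sum_eq_sum_sdiff_singleton_add (Finset.mem_univ j)
        (fun i => A i (B i (XLinv j * u)) + B i (A i (XLinv j * u))),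
      Finset.sum_eq_sum_sdiff_singleton_add (Finset.mem_univ j)
        (fun i => A i (B i u) + B i (A i u))]
    have e1 : ∀ i ∈ Finset.univ \ {j}, A i (B i (XLinv j * u)) + B i (A i (XLinv j * u))
        = XLinv j * (A i (B i u) + B i (A i u))
          + (XLinv j * (XLinv j * (XLinv i * P j (s j i u)))
            - XLinv j * (XLinv i * (XLinv i * Q i (s j i u)))) := by
      intro i hi
      have hij : i ≠ j := hmem j i hi
      have hji : j ≠ i := hij.symm
      have eA : A i (B i (XLinv j * u))
          = XLinv j * A i (B i u) - XLinv j * (XLinv i * (XLinv i * Q i (s j i u))) := by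
        rw [hB1' i j hji u, map_sub, hA1' i j hji (B i u),
          hA1' i j hji (XLinv i * s i j u), hA3 i (s i j u), ssf i j hij u]
        abel
      have eB : B i (A i (XLinv j * u))
          = XLinv j * B i (A i u) + XLinv j * (XLinv j * (XLinv i * P j (s j i u))) := by
        rw [hA1' i j hji u, map_neg, hB1' i j hji (A i u), sA i j hij u,
          hAapp j (s i j u), aII i j hij (P j (s i j u)), ssf i j hij u, mulneg]
        abel
      rw [eA, eB, mul_add]
      abel
    rw [Finset.sum_congr rfl e1, Finset.sum_add_distrib, Finset.sum_sub_distrib,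
      ← Finset.mul_sum]
    have eAj : A j (B j (XLinv j * u))
        = (∑ k ∈ Finset.univ \ {j}, XLinv j * (XLinv j * (XLinv k * Q j (s j k u))))
          - XLinv j * (XLinv j * Q j (B j u)) := by
      rw [hB2' j u, map_sub, map_sum, hA3 j (B j u)]
      congr 1
      refine Finset.sum_congr rfl fun k hk => ?_
      have hkj : k ≠ j := hmem j k hk
      rw [hA3 j (XLinv k * s j k u), QmulI j k hkj (s j k u)]
    have eBj : B j (A j (XLinv j * u))
        = (∑ k ∈ Finset.univ \ {j}, XLinv j * (XLinv k * (XLinv k * Q k (s j k u))))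
          - (∑ k ∈ Finset.univ \ {j}, XLinv j * (XLinv j * (XLinv k * s j k (Q j u))))
          + XLinv j * (XLinv j * B j (Q j u)) := by
      rw [hA3 j u, hB2' j (XLinv j * Q j u)]
      have h1 : ∀ k ∈ Finset.univ \ {j},
          XLinv j * (XLinv k * s j k (XLinv j * Q j u))
            = XLinv j * (XLinv k * (XLinv k * Q k (s j k u))) := by
        intro k hk
        have hjk : j ≠ k := (hmem j k hk).symm
        rw [smulI j k hjk j (Q j u), Equiv.swap_apply_left, sQ j k hjk u]
      rw [Finset.sum_congr rfl h1, hB2' j (Q j u), mul_sub, Finset.mul_sum]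
      abel
    have h5 : B j (XLinv j * A j u)
        = (∑ k ∈ Finset.univ \ {j}, XLinv j * (XLinv k * s j k (A j u)))
          - (∑ k ∈ Finset.univ \ {j}, XLinv j * (XLinv j * (XLinv k * s j k (P j u))))
          + XLinv j * (XLinv j * B j (P j u)) := by
      rw [show XLinv j * A j u = XLinv j * (XLinv j * P j u) from by rw [hAapp j u]]
      rw [hB2' j (XLinv j * P j u)]
      have h6 : ∀ k ∈ Finset.univ \ {j},
          XLinv j * (XLinv k * s j k (XLinv j * P j u))
            = XLinv j * (XLinv k * s j k (A j u)) := by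
        intro k hk
        have hjk : j ≠ k := (hmem j k hk).symm
        rw [smulI j k hjk j (P j u), Equiv.swap_apply_left, sP j k hjk u, sA j k hjk u,
          hAapp k (s j k u)]
      rw [Finset.sum_congr rfl h6, hB2' j (P j u), mul_sub, Finset.mul_sum]
      abel
    have eRj : XLinv j * (A j (B j u) + B j (A j u))
        = XLinv j * (XLinv j * P j (B j u))
          + ((∑ k ∈ Finset.univ \ {j}, XLinv j * (XLinv j * (XLinv k * s j k (P j u))))
            - XLinv j * (XLinv j * B j (P j u))) := by
      rw [mul_add]
      have hL : XLinv j * A j (B j u) = XLinv j * (XLinv j * P j (B j u)) := by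
        rw [hAapp j (B j u)]
      have h3 : XLinv j * B j (A j u)
          = (∑ k ∈ Finset.univ \ {j}, XLinv j * (XLinv k * s j k (A j u)))
            - B j (XLinv j * A j u) := by
        rw [hB2' j (A j u)]; abel
      rw [hL, h3, h5]
      abel
    have hterm : ∀ k ∈ Finset.univ \ {j},
        XLinv j * (XLinv j * (XLinv k * P j (s j k u)))
          + XLinv j * (XLinv j * (XLinv k * Q j (s j k u)))
          - XLinv j * (XLinv j * (XLinv k * s j k (Q j u)))
        = XLinv j * (XLinv j * (XLinv k * s j k (P j u))) := by
      intro k hk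
      have hx : P j (s j k u) + Q j (s j k u) = s j k u := by
        rw [add_comm]; exact hPQ j (s j k u)
      have hy : s j k (Q j u) + s j k (P j u) = s j k u := by
        rw [← map_add, hPQ j u]
      have hz : P j (s j k u) + Q j (s j k u) - s j k (Q j u) = s j k (P j u) := by
        rw [hx, ← hy]; abel
      simp only [← mul_add, ← mul_sub]
      rw [hz]
    have hsum : (∑ k ∈ Finset.univ \ {j}, XLinv j * (XLinv j * (XLinv k * P j (s j k u))))
          + (∑ k ∈ Finset.univ \ {j}, XLinv j * (XLinv j * (XLinv k * Q j (s j k u))))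
          - (∑ k ∈ Finset.univ \ {j}, XLinv j * (XLinv j * (XLinv k * s j k (Q j u))))
        = ∑ k ∈ Finset.univ \ {j}, XLinv j * (XLinv j * (XLinv k * s j k (P j u))) := by
      rw [← Finset.sum_add_distrib, ← Finset.sum_sub_distrib]
      exact Finset.sum_congr rfl hterm
    rw [eAj, eBj, mul_add _ (∑ i ∈ Finset.univ \ {j}, (A i (B i u) + B i (A i u))) _, eRj,
      ← hsum]
    have eQB : Q j (B j u) = B j u - P j (B j u) := eq_sub_of_add_eq (hPQ j (B j u))
    have eBQ : B j (Q j u) = B j u - B j (P j u) := by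
      have h7 : B j (Q j u) + B j (P j u) = B j u := by rw [← map_add, hPQ j u]
      exact eq_sub_of_add_eq h7
    rw [eQB, eBQ]
    simp only [mul_sub]
    abel
  -- § conclusion
  have hTgen : ∀ (a : Fin n ⊕ Fin n) (u : SkewLaurent n),
      (∑ i : Fin n, (A i (B i (genL a * u)) + B i (A i (genL a * u))))
        = genL a * ∑ i : Fin n, (A i (B i u) + B i (A i u)) := by
    rintro (j | j) u
    · exact step1 j u
    · exact step2 j u
  have hT1 : (∑ i : Fin n, (A i (B i (1 : SkewLaurent n)) + B i (A i 1))) = 0 := by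
    have hA0 : ∀ i : Fin n, A i (1 : SkewLaurent n) = 0 := by
      intro i
      rw [hAapp]
      have hP0 : P i (1 : SkewLaurent n) = 0 := by
        simp only [hPdef]
        rw [map_one, sub_self, smul_zero]
      rw [hP0, mul_zero]
    have hB0 : ∀ i : Fin n, B i (1 : SkewLaurent n) = 0 := by
      intro i
      rw [hBapp]
      refine Finset.sum_eq_zero fun k hk => ?_
      have hik : i ≠ k := (hmem i k hk).symm
      rw [hrapp i k hik, map_one, pd1 i k hik]
    refine Finset.sum_eq_zero fun i _ => ?_
    rw [hB0 i, hA0 i, map_zero, map_zero, add_zero]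
  have key : ∀ y : FreeAlgebra ℂ (Fin n ⊕ Fin n), ∀ u : SkewLaurent n,
      (∑ i : Fin n, (A i (B i u) + B i (A i u))) = 0 →
      (∑ i : Fin n, (A i (B i (RingQuot.mkAlgHom ℂ (SkewLRel n) y * u))
        + B i (A i (RingQuot.mkAlgHom ℂ (SkewLRel n) y * u)))) = 0 := by
    intro y
    induction y using FreeAlgebra.induction with
    | grade0 c =>
      intro u hu
      rw [AlgHom.commutes]
      rw [show (algebraMap ℂ (SkewLaurent n) c) * u = c • u from (Algebra.smul_def c u).symm]
      calc (∑ i : Fin n, (A i (B i (c • u)) + B i (A i (c • u))))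
          = ∑ i : Fin n, c • (A i (B i u) + B i (A i u)) := by
            refine Finset.sum_congr rfl fun i _ => ?_
            rw [map_smul, map_smul, map_smul, map_smul, smul_add]
        _ = c • ∑ i : Fin n, (A i (B i u) + B i (A i u)) := (Finset.smul_sum).symm
        _ = 0 := by rw [hu, smul_zero]
    | grade1 a =>
      intro u hu
      rw [← hgen a, hTgen a u, hu, mul_zero]
    | mul x y hx hy =>
      intro u hu
      rw [map_mul, mul_assoc]
      exact hx _ (hy u hu)
    | add x y hx hy =>
      intro u hu
      have hsplit : (∑ i : Fin n, (A i (B i (RingQuot.mkAlgHom ℂ (SkewLRel n) (x + y) * u))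
            + B i (A i (RingQuot.mkAlgHom ℂ (SkewLRel n) (x + y) * u))))
          = (∑ i : Fin n, (A i (B i (RingQuot.mkAlgHom ℂ (SkewLRel n) x * u))
              + B i (A i (RingQuot.mkAlgHom ℂ (SkewLRel n) x * u))))
            + (∑ i : Fin n, (A i (B i (RingQuot.mkAlgHom ℂ (SkewLRel n) y * u))
              + B i (A i (RingQuot.mkAlgHom ℂ (SkewLRel n) y * u)))) := by
        rw [← Finset.sum_add_distrib]
        refine Finset.sum_congr rfl fun i _ => ?_
        simp only [map_add, add_mul]
        abel
      rw [hsplit, hx u hu, hy u hu, add_zero]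
  apply LinearMap.ext
  intro u
  rw [LinearMap.zero_apply]
  have hABop : (∑ i : Fin n, (A i * B i + B i * A i)) u
      = ∑ i : Fin n, (A i (B i u) + B i (A i u)) := by
    rw [LinearMap.sum_apply]
    exact Finset.sum_congr rfl fun i _ => rfl
  rw [hABop]
  obtain ⟨y, rfl⟩ := RingQuot.mkAlgHom_surjective ℂ (SkewLRel n) u
  have h8 := key y 1 hT1
  rw [mul_one] at h8
  exact h8
end
end

section
/- The operator S = Σ_{i=1}^n Σ_{k ≠ i} s_{i,k} commutes with Δ: S ∘ Δ = Δ ∘ S as operators on P⁻. -/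
noncomputable section

set_option maxRecDepth 4000

namespace Skew

variable {n : ℕ}

lemma X_anticomm {i j : Fin n} (h : i ≠ j) : X i * X j = -(X j * X i) := by
  have := RingQuot.mkAlgHom_rel ℂ (SkewRel.anticomm i j h)
  simpa [X, map_mul, map_neg] using this

lemma X_anticomm_smul {i j : Fin n} (h : i ≠ j) :
    X i * X j = ((-1 : ℂ)) • (X j * X i) := by
  rw [X_anticomm h]; module

lemma isHomog_X (a : Fin n) : IsHomog 1 (X a) :=
  Submodule.subset_span ⟨[a], rfl, by simp⟩

lemma isHomog_one : IsHomog 0 (1 : SkewPoly n) :=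
  Submodule.subset_span ⟨[], rfl, by simp⟩

lemma adjoin_X_top : Algebra.adjoin ℂ (Set.range (X (n := n))) = ⊤ := by
  rw [eq_top_iff]
  intro y _
  obtain ⟨x, rfl⟩ := RingQuot.mkAlgHom_surjective ℂ (SkewRel n) y
  have hrange : Set.range (X (n := n))
      = RingQuot.mkAlgHom ℂ (SkewRel n) '' Set.range (FreeAlgebra.ι ℂ) := by
    rw [← Set.range_comp]; rfl
  rw [hrange, ← AlgHom.map_adjoin, FreeAlgebra.adjoin_range_ι]
  exact ⟨x, trivial, rfl⟩

lemma list_prod_mon (l : List (SkewPoly n)) (hl : ∀ x ∈ l, x ∈ Set.range (X (n := n))) :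
    ∃ w : List (Fin n), l.prod = (w.map X).prod := by
  induction l with
  | nil => exact ⟨[], by simp⟩
  | cons a l ih =>
    obtain ⟨w, hw⟩ := ih (fun x hx => hl x (List.mem_cons_of_mem _ hx))
    obtain ⟨b, hb⟩ := hl a List.mem_cons_self
    exact ⟨b :: w, by simp [List.prod_cons, ← hb, hw]⟩

lemma span_mon_top :
    Submodule.span ℂ {m : SkewPoly n | ∃ w : List (Fin n), m = (w.map X).prod} = ⊤ := by
  rw [eq_top_iff]
  intro y _
  have hy : y ∈ Algebra.adjoin ℂ (Set.range (X (n := n))) := by rw [adjoin_X_top]; trivial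
  have hy2 : y ∈ Submodule.span ℂ
      ((Submonoid.closure (Set.range (X (n := n)))) : Set (SkewPoly n)) := by
    rw [← Algebra.adjoin_eq_span]; exact hy
  refine Submodule.span_mono ?_ hy2
  intro m hm
  obtain ⟨l, hl, hprod⟩ := Submonoid.exists_list_of_mem_closure hm
  obtain ⟨w, hw⟩ := list_prod_mon l hl
  exact ⟨w, by rw [← hprod, hw]⟩

/-- two linear endomorphisms agreeing on all word-monomials are equal -/
lemma ext_mon {F G : Module.End ℂ (SkewPoly n)}
    (h : ∀ w : List (Fin n), F ((w.map X).prod) = G ((w.map X).prod)) : F = G := by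
  ext y
  have hy : y ∈ Submodule.span ℂ {m : SkewPoly n | ∃ w : List (Fin n), m = (w.map X).prod} := by
    rw [span_mon_top]; trivial
  induction hy using Submodule.span_induction with
  | mem m hm => obtain ⟨w, rfl⟩ := hm; exact h w
  | zero => simp
  | add x y _ _ hx hy => simp [hx, hy]
  | smul c x _ hx => simp [hx]

/-- algebra homs agreeing on generators are equal -/
lemma algHom_ext {F G : SkewPoly n →ₐ[ℂ] SkewPoly n} (h : ∀ i, F (X i) = G (X i)) : F = G := by
  have : F.comp (RingQuot.mkAlgHom ℂ (SkewRel n)) = G.comp (RingQuot.mkAlgHom ℂ (SkewRel n)) :=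
    FreeAlgebra.hom_ext (funext fun i => h i)
  refine AlgHom.ext fun y => ?_
  obtain ⟨x, rfl⟩ := RingQuot.mkAlgHom_surjective ℂ (SkewRel n) y
  exact DFunLike.congr_fun this x


lemma swap_conj (σ : Equiv.Perm (Fin n)) (j m a : Fin n) :
    Equiv.swap (σ j) (σ m) (σ a) = σ (Equiv.swap j m a) := by
  rcases eq_or_ne a j with rfl | haj
  · simp
  rcases eq_or_ne a m with rfl | ham
  · simp
  rw [Equiv.swap_apply_of_ne_of_ne (σ.injective.ne haj) (σ.injective.ne ham),
    Equiv.swap_apply_of_ne_of_ne haj ham]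

section Ops

variable (s : Fin n → Fin n → (SkewPoly n →ₐ[ℂ] SkewPoly n))
variable (pd : Fin n → Fin n → Module.End ℂ (SkewPoly n))

lemma pd_one
    (hpdL : ∀ i k : Fin n, i ≠ k → ∀ (d : ℕ) (f g : SkewPoly n), IsHomog d f →
      pd i k (f * g) = pd i k f * g + (-1 : ℂ) ^ d • (s i k f * pd i k g))
    {j m : Fin n} (hjm : j ≠ m) : pd j m (1 : SkewPoly n) = 0 := by
  have h := hpdL j m hjm 0 1 1 isHomog_one
  simp only [mul_one, pow_zero, one_smul, map_one, one_mul] at h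
  exact add_eq_left.mp h.symm

lemma pd_mul_X
    (hs : ∀ i k j : Fin n, i ≠ k → s i k (X j) = X (Equiv.swap i k j))
    (hpdi : ∀ i k : Fin n, i ≠ k → pd i k (X i) = 1)
    (hpdk : ∀ i k : Fin n, i ≠ k → pd i k (X k) = 1)
    (hpd0 : ∀ i k j : Fin n, i ≠ k → j ≠ i → j ≠ k → pd i k (X j) = 0)
    (hpdL : ∀ i k : Fin n, i ≠ k → ∀ (d : ℕ) (f g : SkewPoly n), IsHomog d f →
      pd i k (f * g) = pd i k f * g + (-1 : ℂ) ^ d • (s i k f * pd i k g))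
    {j m : Fin n} (hjm : j ≠ m) (a : Fin n) (g : SkewPoly n) :
    pd j m (X a * g)
      = (if a = j ∨ a = m then g else 0) - X (Equiv.swap j m a) * pd j m g := by
  have h := hpdL j m hjm 1 (X a) g (isHomog_X a)
  have h1 : pd j m (X a) * g = (if a = j ∨ a = m then g else 0) := by
    rcases eq_or_ne a j with rfl | haj
    · rw [hpdi _ _ hjm, if_pos (Or.inl rfl), one_mul]
    rcases eq_or_ne a m with rfl | ham
    · rw [hpdk _ _ hjm, if_pos (Or.inr rfl), one_mul]
    · rw [hpd0 j m a hjm haj ham, if_neg (by tauto), zero_mul]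
  have h2 : ((-1:ℂ))^1 • (X (Equiv.swap j m a) * pd j m g)
      = -(X (Equiv.swap j m a) * pd j m g) := by
    rw [pow_one]; module
  rw [h, hs j m a hjm, h1, h2, sub_eq_add_neg]

lemma s_comp_s
    (hs : ∀ i k j : Fin n, i ≠ k → s i k (X j) = X (Equiv.swap i k j))
    {i k j m : Fin n} (hik : i ≠ k) (hjm : j ≠ m) :
    (s i k).comp (s j m) = (s (Equiv.swap i k j) (Equiv.swap i k m)).comp (s i k) := by
  have hσ : (Equiv.swap i k j) ≠ (Equiv.swap i k m) := (Equiv.swap i k).injective.ne hjm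
  apply algHom_ext
  intro a
  simp only [AlgHom.comp_apply]
  rw [hs j m a hjm, hs i k _ hik, hs i k a hik, hs _ _ _ hσ, swap_conj]

lemma pd_conj
    (hs : ∀ i k j : Fin n, i ≠ k → s i k (X j) = X (Equiv.swap i k j))
    (hpdi : ∀ i k : Fin n, i ≠ k → pd i k (X i) = 1)
    (hpdk : ∀ i k : Fin n, i ≠ k → pd i k (X k) = 1)
    (hpd0 : ∀ i k j : Fin n, i ≠ k → j ≠ i → j ≠ k → pd i k (X j) = 0)
    (hpdL : ∀ i k : Fin n, i ≠ k → ∀ (d : ℕ) (f g : SkewPoly n), IsHomog d f →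
      pd i k (f * g) = pd i k f * g + (-1 : ℂ) ^ d • (s i k f * pd i k g))
    {i k j m : Fin n} (hik : i ≠ k) (hjm : j ≠ m) :
    (s i k).toLinearMap ∘ₗ pd j m
      = pd (Equiv.swap i k j) (Equiv.swap i k m) ∘ₗ (s i k).toLinearMap := by
  have hσ : (Equiv.swap i k j) ≠ (Equiv.swap i k m) := (Equiv.swap i k).injective.ne hjm
  apply ext_mon
  intro w
  induction w with
  | nil =>
    simp [pd_one s pd hpdL hjm, pd_one s pd hpdL hσ]
  | cons a w ih =>
    set P := ((w.map X).prod : SkewPoly n) with hP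
    have hL : (((a :: w).map X).prod : SkewPoly n) = X a * P := by simp [hP]
    simp only [LinearMap.comp_apply, AlgHom.toLinearMap_apply] at ih ⊢
    rw [hL, pd_mul_X s pd hs hpdi hpdk hpd0 hpdL hjm a P, map_sub, map_mul, map_mul,
      hs i k a hik, hs i k (Equiv.swap j m a) hik,
      pd_mul_X s pd hs hpdi hpdk hpd0 hpdL hσ (Equiv.swap i k a) ((s i k) P),
      swap_conj, ih, apply_ite (s i k), map_zero]
    simp [Equiv.apply_eq_iff_eq]

end Ops

def OM (lam : Fin n → ℕ) : SkewPoly n := ((List.finRange n).map fun j => X j ^ lam j).prod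

lemma take_sum (lam : Fin n → ℕ) (c : ℕ) :
    ((((List.finRange n).take c).map lam).sum)
      = ∑ l ∈ Finset.filter (fun l : Fin n => l.val < c) Finset.univ, lam l := by
  induction c with
  | zero => simp
  | succ c ih =>
    rcases le_or_gt n c with h | h
    · have h1 : ((List.finRange n).take (c+1)) = (List.finRange n).take c := by
        rw [List.take_of_length_le (by rw [List.length_finRange]; omega),
          List.take_of_length_le (by rw [List.length_finRange]; omega)]
      have h2 : Finset.filter (fun l : Fin n => l.val < c + 1) Finset.univ
          = Finset.filter (fun l : Fin n => l.val < c) Finset.univ := by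
        ext l; simp only [Finset.mem_filter, Finset.mem_univ, true_and]
        have := l.isLt; omega
      rw [h1, h2, ih]
    · have hlen : c < (List.finRange n).length := by simpa using h
      have hfilter : Finset.filter (fun l : Fin n => l.val < c+1) Finset.univ
          = insert (⟨c, h⟩ : Fin n) (Finset.filter (fun l : Fin n => l.val < c) Finset.univ) := by
        ext l
        simp only [Finset.mem_filter, Finset.mem_univ, true_and, Finset.mem_insert, Fin.ext_iff]
        omega
      rw [List.take_succ, hfilter, Finset.sum_insert (by simp)]
      rw [List.map_append, List.sum_append, ih]
      have hg : (List.finRange n)[c]?.toList = [(⟨c, h⟩ : Fin n)] := by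
        simp only [List.getElem?_eq_getElem hlen, Option.toList_some, List.getElem_finRange]
        rfl
      rw [hg]
      simp only [List.map_cons, List.map_nil, List.sum_cons, List.sum_nil, add_zero]
      exact Nat.add_comm _ _

lemma Iio_filter (a : Fin n) :
    Finset.Iio a = Finset.filter (fun l : Fin n => l.val < a.val) Finset.univ := by
  ext l
  simp only [Finset.mem_Iio, Finset.mem_filter, Finset.mem_univ, true_and, Fin.lt_def]

lemma X_pow_comm {j l : Fin n} (h : j ≠ l) (m : ℕ) :
    X j * X l ^ m = ((-1:ℂ))^m • (X l ^ m * X j) := by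
  induction m with
  | zero => simp
  | succ m ih =>
    rw [pow_succ, ← mul_assoc, ih, smul_mul_assoc, mul_assoc, X_anticomm_smul h,
      mul_smul_comm, ← mul_assoc, pow_succ]
    module

lemma X_mul_word (a : Fin n) (lam : Fin n → ℕ) (w : List (Fin n)) (hw : a ∉ w) :
    X a * ((w.map fun l => X l ^ lam l).prod)
      = ((-1:ℂ))^((w.map lam).sum) • (((w.map fun l => X l ^ lam l).prod) * X a) := by
  induction w with
  | nil => simp
  | cons b w ih =>
    have hab : a ≠ b := fun hab => hw (hab ▸ (by simp : b ∈ b :: w))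
    have haw : a ∉ w := fun hx => hw (List.mem_cons_of_mem _ hx)
    simp only [List.map_cons, List.prod_cons, List.sum_cons]
    rw [← mul_assoc, X_pow_comm hab (lam b), smul_mul_assoc, mul_assoc, ih haw,
      mul_smul_comm, smul_smul, ← pow_add, ← mul_assoc]

lemma push (a : Fin n) (lam : Fin n → ℕ) :
    X a * OM lam
      = ((-1:ℂ))^(∑ l ∈ Finset.Iio a, lam l) • OM (Function.update lam a (lam a + 1)) := by
  classical
  set L := List.finRange n with hLdef
  have hlen : a.val < L.length := by simp [hLdef]
  set T := L.take a.val with hT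
  set Dr := L.drop (a.val + 1) with hDr
  have hsplit : L = T ++ a :: Dr := by
    rw [hT, hDr]
    conv_lhs => rw [← List.take_append_drop a.val L]
    congr 1
    rw [List.drop_eq_getElem_cons hlen]
    congr 1
    simp [hLdef]
  have hnodup : (T ++ a :: Dr).Nodup := by rw [← hsplit, hLdef]; exact List.nodup_finRange n
  have haT : a ∉ T := by
    intro haT
    have := List.disjoint_of_nodup_append hnodup haT
    exact this List.mem_cons_self
  have haD : a ∉ Dr := by
    have := (List.nodup_append.mp hnodup).2.1
    exact (List.nodup_cons.mp this).1
  have hmapT : ∀ (mu : Fin n → ℕ), (T.map fun l => X l ^ (Function.update mu a (mu a + 1)) l)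
      = T.map fun l => X l ^ mu l := by
    intro mu
    refine List.map_congr_left fun l hl => ?_
    rw [Function.update_of_ne (by rintro rfl; exact haT hl)]
  have hmapD : ∀ (mu : Fin n → ℕ), (Dr.map fun l => X l ^ (Function.update mu a (mu a + 1)) l)
      = Dr.map fun l => X l ^ mu l := by
    intro mu
    refine List.map_congr_left fun l hl => ?_
    rw [Function.update_of_ne (by rintro rfl; exact haD hl)]
  have hOM : ∀ (mu : Fin n → ℕ), OM mu
      = (T.map fun l => X l ^ mu l).prod * (X a ^ mu a * (Dr.map fun l => X l ^ mu l).prod) := by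
    intro mu
    rw [OM, ← hLdef, hsplit]
    simp [List.prod_append]
  have hsum : ((T.map lam).sum) = ∑ l ∈ Finset.Iio a, lam l := by
    rw [hT, take_sum, Iio_filter]
  rw [hOM lam, hOM (Function.update lam a (lam a + 1)), hmapT, hmapD,
    Function.update_self]
  rw [← mul_assoc, X_mul_word a lam T haT, hsum, smul_mul_assoc, mul_assoc]
  congr 1
  rw [← mul_assoc (X a), ← pow_succ']
lemma OM_zero : OM (fun _ => 0 : Fin n → ℕ) = (1 : SkewPoly n) := by
  rw [OM]
  refine List.prod_eq_one fun x hx => ?_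
  obtain ⟨l, -, rfl⟩ := List.mem_map.mp hx
  exact pow_zero _

lemma straighten (w : List (Fin n)) :
    ∃ (c : ℂ) (lam : Fin n → ℕ), ((w.map X).prod) = c • OM lam := by
  induction w with
  | nil => exact ⟨1, fun _ => 0, by rw [OM_zero]; simp⟩
  | cons a w ih =>
    obtain ⟨c, lam, hc⟩ := ih
    refine ⟨c * (-1:ℂ)^(∑ l ∈ Finset.Iio a, lam l), Function.update lam a (lam a + 1), ?_⟩
    rw [List.map_cons, List.prod_cons, hc, mul_smul_comm, push, smul_smul]

lemma ext_OM {F G : Module.End ℂ (SkewPoly n)} (h : ∀ lam, F (OM lam) = G (OM lam)) : F = G := by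
  apply ext_mon
  intro w
  obtain ⟨c, lam, hc⟩ := straighten w
  rw [hc, map_smul, map_smul, h]

lemma pow_sum_update (lam : Fin n → ℕ) (b c : Fin n) (v : ℕ) :
    ((-1:ℂ))^(∑ l ∈ Finset.Iio b, Function.update lam c v l)
      = if c < b then ((-1:ℂ))^(∑ l ∈ Finset.Iio b, lam l) * ((-1:ℂ))^(lam c) * ((-1:ℂ))^v
        else ((-1:ℂ))^(∑ l ∈ Finset.Iio b, lam l) := by
  by_cases hcb : c < b
  · rw [if_pos hcb]
    have hc : c ∈ Finset.Iio b := Finset.mem_Iio.mpr hcb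
    rw [← Finset.sum_erase_add _ _ hc, ← Finset.sum_erase_add _ lam hc]
    have he : ∑ l ∈ (Finset.Iio b).erase c, Function.update lam c v l
        = ∑ l ∈ (Finset.Iio b).erase c, lam l :=
      Finset.sum_congr rfl fun l hl => Function.update_of_ne (Finset.ne_of_mem_erase hl) _ _
    rw [he, Function.update_self, pow_add, pow_add]
    have key : ((-1:ℂ))^(lam c) * ((-1:ℂ))^(lam c) = 1 := by
      rw [← pow_add]; exact Even.neg_one_pow ⟨lam c, rfl⟩
    linear_combination (-((-1:ℂ))^(∑ l ∈ (Finset.Iio b).erase c, lam l) * ((-1:ℂ))^v) * key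
  · rw [if_neg hcb]
    congr 1
    refine Finset.sum_congr rfl fun l hl => Function.update_of_ne ?_ _ _
    rintro rfl
    exact hcb (Finset.mem_Iio.mp hl)

lemma p_mul_X
    (p : Fin n → Module.End ℂ (SkewPoly n))
    (hp : ∀ (i : Fin n) (lam : Fin n → ℕ), p i (OM lam)
        = ((lam i : ℂ) * (-1 : ℂ) ^ (∑ l ∈ Finset.Iio i, lam l)) •
            OM (Function.update lam i (lam i - 1)))
    (j a : Fin n) (g : SkewPoly n) :
    p j (X a * g) = (if a = j then g else 0)
      + (if a = j then (1:ℂ) else -1) • (X a * p j g) := by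
  have key : ∀ m : ℕ, ((-1:ℂ))^m * ((-1:ℂ))^m = 1 := fun m => by
    rw [← pow_add]; exact Even.neg_one_pow ⟨m, rfl⟩
  rcases eq_or_ne a j with rfl | haj
  · rw [if_pos rfl, if_pos rfl, one_smul]
    have hmap : p a ∘ₗ LinearMap.mulLeft ℂ (X a)
        = LinearMap.id + LinearMap.mulLeft ℂ (X a) ∘ₗ p a := by
      apply ext_OM
      intro lam
      simp only [LinearMap.comp_apply, LinearMap.add_apply, LinearMap.id_apply,
        LinearMap.mulLeft_apply]
      have hsum1 : ∀ v : ℕ, ∑ l ∈ Finset.Iio a, Function.update lam a v l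
          = ∑ l ∈ Finset.Iio a, lam l := fun v =>
        Finset.sum_congr rfl fun l hl =>
          Function.update_of_ne (Finset.mem_Iio.mp hl).ne _ _
      rw [push a lam, map_smul, hp a (Function.update lam a (lam a + 1)), hsum1,
        Function.update_self, Nat.add_sub_cancel, Function.update_idem, Function.update_eq_self,
        hp a lam, mul_smul_comm, push a (Function.update lam a (lam a - 1)), hsum1,
        Function.update_self, Function.update_idem]
      rcases eq_or_ne (lam a) 0 with h0 | h0
      · simp [h0, smul_smul, key]
      · rw [Nat.sub_add_cancel (Nat.one_le_iff_ne_zero.mpr h0), Function.update_eq_self]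
        push_cast
        match_scalars <;>
          first
            | ring1
            | linear_combination ((lam a : ℂ) + 1) * key (∑ l ∈ Finset.Iio a, lam l)
            | linear_combination (-(lam a : ℂ)) * key (∑ l ∈ Finset.Iio a, lam l)
            | linear_combination key (∑ l ∈ Finset.Iio a, lam l)
    have := DFunLike.congr_fun hmap g
    simpa only [LinearMap.comp_apply, LinearMap.add_apply, LinearMap.id_apply,
      LinearMap.mulLeft_apply] using this
  · simp only [if_neg haj]
    rw [zero_add]
    have hmap : p j ∘ₗ LinearMap.mulLeft ℂ (X a)
        = (-1:ℂ) • (LinearMap.mulLeft ℂ (X a) ∘ₗ p j) := by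
      apply ext_OM
      intro lam
      simp only [LinearMap.comp_apply, LinearMap.smul_apply, LinearMap.mulLeft_apply]
      rw [push a lam, map_smul, hp j (Function.update lam a (lam a + 1)),
        Function.update_of_ne (Ne.symm haj), Function.update_comm haj,
        pow_sum_update lam j a (lam a + 1),
        hp j lam, mul_smul_comm, push a (Function.update lam j (lam j - 1)),
        pow_sum_update lam a j (lam j - 1), Function.update_of_ne haj]
      rcases eq_or_ne (lam j) 0 with h0 | h0
      · simp [h0]
      · have hQ : ((-1:ℂ))^(lam j) = ((-1:ℂ))^(lam j - 1) * (-1) := by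
          conv_lhs => rw [← Nat.sub_add_cancel (Nat.one_le_iff_ne_zero.mpr h0)]
          rw [pow_succ]
        by_cases hlt : a < j
        · rw [if_pos hlt, if_neg (asymm hlt)]
          match_scalars
          linear_combination (-(lam j : ℂ) * (-1:ℂ)^(∑ l ∈ Finset.Iio j, lam l)
            * (-1:ℂ)^(∑ l ∈ Finset.Iio a, lam l)) * key (lam a)
        · rw [if_neg hlt]
          have hja : j < a := lt_of_le_of_ne (not_lt.mp hlt) (Ne.symm haj)
          rw [if_pos hja]
          match_scalars
          linear_combination (-(lam j : ℂ) * (-1:ℂ)^(∑ l ∈ Finset.Iio j, lam l)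
              * (-1:ℂ)^(∑ l ∈ Finset.Iio a, lam l)) * key (lam j - 1)
            + ((lam j : ℂ) * (-1:ℂ)^(∑ l ∈ Finset.Iio j, lam l)
              * (-1:ℂ)^(∑ l ∈ Finset.Iio a, lam l) * (-1:ℂ)^(lam j - 1)) * hQ
    have := DFunLike.congr_fun hmap g
    simpa only [LinearMap.comp_apply, LinearMap.smul_apply, LinearMap.mulLeft_apply] using this

lemma p_conj
    (s : Fin n → Fin n → (SkewPoly n →ₐ[ℂ] SkewPoly n))
    (hs : ∀ i k j : Fin n, i ≠ k → s i k (X j) = X (Equiv.swap i k j))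
    (p : Fin n → Module.End ℂ (SkewPoly n))
    (hp : ∀ (i : Fin n) (lam : Fin n → ℕ), p i (OM lam)
        = ((lam i : ℂ) * (-1 : ℂ) ^ (∑ l ∈ Finset.Iio i, lam l)) •
            OM (Function.update lam i (lam i - 1)))
    {i k : Fin n} (hik : i ≠ k) (j : Fin n) :
    (s i k).toLinearMap ∘ₗ p j = p (Equiv.swap i k j) ∘ₗ (s i k).toLinearMap := by
  have h1 : ∀ l : Fin n, p l (1 : SkewPoly n) = 0 := fun l => by
    have h := hp l (fun _ => 0)
    rw [OM_zero] at h
    simpa using h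
  apply ext_mon
  intro w
  induction w with
  | nil => simp [h1]
  | cons a w ih =>
    set P := ((w.map X).prod : SkewPoly n) with hP
    have hL : (((a :: w).map X).prod : SkewPoly n) = X a * P := by simp [hP]
    simp only [LinearMap.comp_apply, AlgHom.toLinearMap_apply] at ih ⊢
    rw [hL, p_mul_X p hp j a P, map_add, map_smul, map_mul, hs i k a hik,
      map_mul (s i k) (X a) P, hs i k a hik,
      p_mul_X p hp (Equiv.swap i k j) (Equiv.swap i k a) ((s i k) P), ih,
      apply_ite (s i k), map_zero]
    simp [Equiv.apply_eq_iff_eq]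

end Skew

open Skew in
/-- The operator `S = Σᵢ Σ_{k ≠ i} s_{i,k}` commutes with `Δ`. -/
theorem stmt12 (n : ℕ) (hn : 2 ≤ n)
    -- `s i k` is the algebra automorphism of `P⁻` swapping `xᵢ` and `x_k`
    (s : Fin n → Fin n → (SkewPoly n →ₐ[ℂ] SkewPoly n))
    (hs : ∀ i k j : Fin n, i ≠ k → s i k (X j) = X (Equiv.swap i k j))
    -- `τ i` is the algebra automorphism of `P⁻` sending `xᵢ` to `-xᵢ` and fixing the others
    (τ : Fin n → (SkewPoly n →ₐ[ℂ] SkewPoly n))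
    (hτ : ∀ i j : Fin n, τ i (X j) = if j = i then -X j else X j)
    -- `pd i k` is the odd divided difference operator `∂_{i,k}`
    (pd : Fin n → Fin n → Module.End ℂ (SkewPoly n))
    (hpdi : ∀ i k : Fin n, i ≠ k → pd i k (X i) = 1)
    (hpdk : ∀ i k : Fin n, i ≠ k → pd i k (X k) = 1)
    (hpd0 : ∀ i k j : Fin n, i ≠ k → j ≠ i → j ≠ k → pd i k (X j) = 0)
    (hpdL : ∀ i k : Fin n, i ≠ k → ∀ (d : ℕ) (f g : SkewPoly n), IsHomog d f →
      pd i k (f * g) = pd i k f * g + (-1 : ℂ) ^ d • (s i k f * pd i k g))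
    -- `r i k = ∂_{i,k} ∘ s_{i,k}`
    (r : Fin n → Fin n → Module.End ℂ (SkewPoly n))
    (hr : ∀ i k : Fin n, i ≠ k → r i k = pd i k ∘ₗ (s i k).toLinearMap)
    -- `p i` is the operator `pᵢ`, defined on the monomial basis
    (p : Fin n → Module.End ℂ (SkewPoly n))
    (hp : ∀ (i : Fin n) (lam : Fin n → ℕ),
      p i (((List.finRange n).map fun j => X j ^ lam j).prod)
        = ((lam i : ℂ) * (-1 : ℂ) ^ (∑ j ∈ Finset.Iio i, lam j)) •
            ((List.finRange n).map fun j => X j ^ (Function.update lam i (lam i - 1)) j).prod)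
    (t u : ℂ) (ht : t ≠ 0)
    -- `D i = t pᵢ + u Σ_{k ≠ i} r_{i,k}`
    (D : Fin n → Module.End ℂ (SkewPoly n))
    (hD : ∀ i : Fin n, D i = t • p i + u • ∑ k ∈ Finset.univ \ {i}, r i k)
    -- `Δ = −(2t)⁻¹ Σᵢ Dᵢ²`
    (Δ : Module.End ℂ (SkewPoly n))
    (hΔ : Δ = (-(2 * t)⁻¹) • ∑ i : Fin n, D i ^ 2)
    (S : Module.End ℂ (SkewPoly n))
    (hS : S = ∑ i : Fin n, ∑ k ∈ Finset.univ \ {i}, (s i k).toLinearMap) :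
    S * Δ = Δ * S := by
  classical
  have hpOM : ∀ (i : Fin n) (lam : Fin n → ℕ), p i (OM lam)
      = ((lam i : ℂ) * (-1 : ℂ) ^ (∑ l ∈ Finset.Iio i, lam l)) •
          OM (Function.update lam i (lam i - 1)) := hp
  have hcomm : ∀ i k : Fin n, i ≠ k →
      (s i k).toLinearMap * Δ = Δ * (s i k).toLinearMap := by
    intro i k hik
    have hD' : ∀ j : Fin n, (s i k).toLinearMap * D j
        = D (Equiv.swap i k j) * (s i k).toLinearMap := by
      intro j
      rw [hD j, hD (Equiv.swap i k j), mul_add, add_mul]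
      congr 1
      · rw [mul_smul_comm, smul_mul_assoc]
        congr 1
        rw [Module.End.mul_eq_comp, Module.End.mul_eq_comp, p_conj s hs p hpOM hik j]
      · rw [mul_smul_comm, smul_mul_assoc]
        congr 1
        rw [Finset.mul_sum, Finset.sum_mul]
        refine Finset.sum_equiv (Equiv.swap i k) ?_ ?_
        · intro m
          simp [Finset.mem_sdiff, Equiv.apply_eq_iff_eq]
        · intro m hm
          have hjm : j ≠ m := by
            simp only [Finset.mem_sdiff, Finset.mem_univ, true_and,
              Finset.mem_singleton] at hm
            exact Ne.symm hm
          have hσjm : Equiv.swap i k j ≠ Equiv.swap i k m :=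
            (Equiv.swap i k).injective.ne hjm
          have hss := congrArg AlgHom.toLinearMap (s_comp_s s hs hik hjm)
          rw [AlgHom.comp_toLinearMap, AlgHom.comp_toLinearMap] at hss
          rw [hr j m hjm, hr _ _ hσjm, Module.End.mul_eq_comp, Module.End.mul_eq_comp,
            ← LinearMap.comp_assoc, pd_conj s pd hs hpdi hpdk hpd0 hpdL hik hjm,
            LinearMap.comp_assoc, hss, ← LinearMap.comp_assoc]
    have hD2 : ∀ j : Fin n, (s i k).toLinearMap * D j ^ 2
        = D (Equiv.swap i k j) ^ 2 * (s i k).toLinearMap := by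
      intro j
      rw [sq, sq, ← mul_assoc, hD' j, mul_assoc, hD' j, ← mul_assoc]
    rw [hΔ, mul_smul_comm, smul_mul_assoc]
    congr 1
    rw [Finset.mul_sum, Finset.sum_mul]
    calc ∑ j : Fin n, (s i k).toLinearMap * D j ^ 2
        = ∑ j : Fin n, D (Equiv.swap i k j) ^ 2 * (s i k).toLinearMap :=
          Finset.sum_congr rfl fun j _ => hD2 j
      _ = ∑ j : Fin n, D j ^ 2 * (s i k).toLinearMap :=
          Equiv.sum_comp (Equiv.swap i k) (fun j => D j ^ 2 * (s i k).toLinearMap)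
  rw [hS, Finset.sum_mul, Finset.mul_sum]
  refine Finset.sum_congr rfl fun i _ => ?_
  rw [Finset.sum_mul, Finset.mul_sum]
  refine Finset.sum_congr rfl fun k hk => ?_
  have hik : i ≠ k := by
    simp only [Finset.mem_sdiff, Finset.mem_univ, true_and, Finset.mem_singleton] at hk
    exact Ne.symm hk
  exact hcomm i k hik
end
end

section
/- For every 1 ≤ i ≤ n−1 and every 1 ≤ k ≤ n, the q-divided difference operator annihilates the twisted elementary q-symmetric polynomial: ∂_i(ẽ_k) = 0. Hence the subalgebra of P^q_n generated by ẽ₁,…,ẽₙ is contained in ∩_{i=1}^{n−1} ker(∂_i). -/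
noncomputable section

/-- The defining relations of the `q`-polynomial ring
`P^q_n = ℂ⟨x₁,…,xₙ⟩/⟨xⱼxᵢ − q xᵢxⱼ : i < j⟩`. -/
inductive QRel (n : ℕ) (q : ℂ) : FreeAlgebra ℂ (Fin n) → FreeAlgebra ℂ (Fin n) → Prop
  | qcomm (i j : Fin n) (h : i < j) :
      QRel n q (FreeAlgebra.ι ℂ j * FreeAlgebra.ι ℂ i)
        (q • (FreeAlgebra.ι ℂ i * FreeAlgebra.ι ℂ j))

/-- The `q`-polynomial ring `P^q_n`. -/
abbrev QPoly (n : ℕ) (q : ℂ) := RingQuot (QRel n q)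

/-- The generators `xᵢ` of `P^q_n`. -/
def Y {n : ℕ} {q : ℂ} (i : Fin n) : QPoly n q :=
  RingQuot.mkAlgHom ℂ (QRel n q) (FreeAlgebra.ι ℂ i)

/-- The operator of left multiplication by `xᵢ` on `P^q_n`. -/
def mulY {n : ℕ} {q : ℂ} (i : Fin n) : Module.End ℂ (QPoly n q) :=
  LinearMap.mulLeft ℂ (Y i)

/-- Auxiliary "shifted generator" function used to express `∂ᵢ` of a product. -/
def G {n : ℕ} (q : ℂ) (i : Fin n) : Fin n → QPoly n q := fun j =>
  if (j : ℕ) < (i : ℕ) then q⁻¹ • (q ^ (j : ℕ) • Y j) else q ^ (j : ℕ) • Y j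

section Aux

variable {n : ℕ} {q : ℂ}

/-- `∂ᵢ 1 = 0`. -/
lemma pd_one (σi : QPoly n q →ₐ[ℂ] QPoly n q) (pdi : Module.End ℂ (QPoly n q))
    (hL : ∀ f g : QPoly n q, pdi (f * g) = pdi f * g + σi f * pdi g) :
    pdi 1 = 0 := by
  have h := hL 1 1
  simp only [mul_one, one_mul, map_one] at h
  have h2 : pdi 1 + pdi 1 = pdi 1 + 0 := by rw [add_zero]; exact h.symm
  exact add_left_cancel h2

/-- The key computation: `∂ᵢ` of a product of twisted generators over a sorted list. -/
lemma key_prod (i i' : Fin n) (hii' : (i' : ℕ) = (i : ℕ) + 1)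
    (σi : QPoly n q →ₐ[ℂ] QPoly n q)
    (hσ1 : σi (Y i) = q • Y i') (hσ2 : σi (Y i') = q⁻¹ • Y i)
    (hσ4 : ∀ j : Fin n, (j : ℕ) < (i : ℕ) → σi (Y j) = q⁻¹ • Y j)
    (pdi : Module.End ℂ (QPoly n q))
    (hp1 : pdi (Y i) = q • 1) (hp2 : pdi (Y i') = -1)
    (hp3 : ∀ j : Fin n, j ≠ i → j ≠ i' → pdi (Y j) = 0)
    (hL : ∀ f g : QPoly n q, pdi (f * g) = pdi f * g + σi f * pdi g)
    (L : List (Fin n)) (hLs : L.Pairwise (· < ·)) :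
    pdi ((L.map fun j : Fin n => q ^ (j : ℕ) • Y j).prod) =
      if i ∈ L then
        (if i' ∈ L then 0
         else (q ^ ((i : ℕ) + 1)) • ((L.erase i).map (G q i)).prod)
      else
        (if i' ∈ L then (-(q ^ ((i : ℕ) + 1))) • ((L.erase i').map (G q i)).prod
         else 0) := by
  induction L with
  | nil =>
      simp [pd_one σi pdi hL]
  | cons a T ih =>
      rw [List.pairwise_cons] at hLs
      obtain ⟨ha, hTs⟩ := hLs
      have ihT := ih hTs
      have hii : i ≠ i' := by
        intro h; rw [h] at hii'; omega
      -- expand the product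
      rw [List.map_cons, List.prod_cons, hL]
      simp only [map_smul, LinearMap.map_smul]
      rcases lt_trichotomy ((a : ℕ)) ((i : ℕ)) with hcase | hcase | hcase
      · -- a < i
        have hai : a ≠ i := by intro h; rw [h] at hcase; omega
        have hai' : a ≠ i' := by intro h; rw [h] at hcase; omega
        have hpa : pdi (Y a) = 0 := hp3 a hai hai'
        have hσa : σi (Y a) = q⁻¹ • Y a := hσ4 a hcase
        have hmemi : (i ∈ a :: T) = (i ∈ T) := by
          simp [List.mem_cons, (Ne.symm hai)]
        have hmemi' : (i' ∈ a :: T) = (i' ∈ T) := by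
          simp [List.mem_cons, (Ne.symm hai')]
        have herasei : (a :: T).erase i = a :: T.erase i :=
          List.erase_cons_tail (by simp [hai])
        have herasei' : (a :: T).erase i' = a :: T.erase i' :=
          List.erase_cons_tail (by simp [hai'])
        have hGa : G q i a = q⁻¹ • (q ^ (a : ℕ) • Y a) := by
          simp only [G, if_pos hcase]
        rw [hpa, hσa, ihT]
        simp only [smul_zero, zero_mul, zero_add, hmemi, hmemi', herasei, herasei',
          List.map_cons, List.prod_cons, hGa]
        by_cases h1 : i ∈ T <;> by_cases h2 : i' ∈ T <;>
            simp only [h1, h2, if_true, if_false, mul_zero, smul_zero] <;>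
            first
              | rfl
              | (simp only [smul_mul_assoc, mul_smul_comm, smul_smul]; module)
      · -- a = i
        have hai : i = a := (Fin.ext hcase).symm
        subst hai
        have hiT : i ∉ T := fun h => lt_irrefl i (ha i h)
        have hTgt : ∀ j ∈ T, (i : ℕ) < (j : ℕ) := fun j hj => ha j hj
        have hGT : ∀ j ∈ T, G q i j = q ^ (j : ℕ) • Y j := by
          intro j hj
          simp only [G, if_neg (not_lt.mpr (le_of_lt (hTgt j hj)))]
        rw [hp1, hσ1]
        by_cases h2 : i' ∈ T
        · -- the two terms cancel; i' must be the head of T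
          obtain ⟨b, T', rfl⟩ : ∃ b T', T = b :: T' := by
            cases T with
            | nil => simp at h2
            | cons b T' => exact ⟨b, T', rfl⟩
          have hbi' : i' = b := by
            rcases List.mem_cons.mp h2 with h | h
            · exact h
            · exfalso
              have hb1 : (i : ℕ) < (b : ℕ) := hTgt b (List.mem_cons_self)
              have hb2 : (b : ℕ) < (i' : ℕ) := by
                rw [List.pairwise_cons] at hTs
                exact hTs.1 i' h
              omega
          subst hbi'
          have hG' : ∀ j ∈ T', G q i j = q ^ (j : ℕ) • Y j := fun j hj =>
            hGT j (List.mem_cons_of_mem _ hj)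
          have ihT' : pdi ((List.map (fun j : Fin n => q ^ (j : ℕ) • Y j)
              (i' :: T')).prod)
              = (-(q ^ ((i : ℕ) + 1))) •
                (List.map (fun j : Fin n => q ^ (j : ℕ) • Y j) T').prod := by
            rw [ihT, if_neg hiT, if_pos h2, List.erase_cons_head,
              List.map_congr_left hG']
          rw [ihT']
          have hiL : i ∈ i :: i' :: T' := List.mem_cons_self
          have hi'L : i' ∈ i :: i' :: T' := by simp
          rw [if_pos hiL, if_pos hi'L, List.map_cons, List.prod_cons, hii']
          simp only [smul_mul_assoc, mul_smul_comm, smul_smul, one_mul, mul_one,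
            neg_smul, mul_neg, mul_assoc]
          module
        · have ihT' : pdi ((List.map (fun j : Fin n => q ^ (j : ℕ) • Y j) T).prod)
              = 0 := by
            rw [ihT, if_neg hiT, if_neg h2]
          rw [ihT']
          have hGTprod : (T.map (G q i)).prod
              = (T.map fun j : Fin n => q ^ (j : ℕ) • Y j).prod := by
            congr 1; exact List.map_congr_left hGT
          have hiL : i ∈ i :: T := List.mem_cons_self
          have hi'L : i' ∉ i :: T := by
            intro h
            rcases List.mem_cons.mp h with h | h
            · exact hii h.symm
            · exact h2 h
          rw [if_pos hiL, if_neg hi'L, List.erase_cons_head, hGTprod]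
          rw [mul_zero, add_zero, smul_smul, smul_mul_assoc, one_mul, pow_succ]
      · -- a > i
        have hai : a ≠ i := by intro h; rw [h] at hcase; omega
        have hiT : i ∉ T := by
          intro h
          have h3 : a < i := ha i h
          have h4 : (a : ℕ) < (i : ℕ) := h3
          omega
        have hiL : i ∉ a :: T := by
          intro h
          rcases List.mem_cons.mp h with h | h
          · exact hai h.symm
          · exact hiT h
        rcases Nat.lt_or_ge ((i : ℕ) + 1) ((a : ℕ)) with hcase2 | hcase2
        · -- a > i', everything vanishes
          have hai' : a ≠ i' := by intro h; rw [h] at hcase2; omega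
          have hi'T : i' ∉ T := by
            intro h
            have h3 : a < i' := ha i' h
            have h4 : (a : ℕ) < (i' : ℕ) := h3
            omega
          have hi'L : i' ∉ a :: T := by
            intro h
            rcases List.mem_cons.mp h with h | h
            · exact hai' h.symm
            · exact hi'T h
          have hpa : pdi (Y a) = 0 := hp3 a hai hai'
          have ihT' : pdi ((List.map (fun j : Fin n => q ^ (j : ℕ) • Y j) T).prod)
              = 0 := by
            rw [ihT, if_neg hiT, if_neg hi'T]
          rw [hpa, ihT']
          rw [if_neg hiL, if_neg hi'L]
          simp
        · -- a = i'
          have hai' : i' = a := by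
            symm; apply Fin.ext; omega
          subst hai'
          have hi'T : i' ∉ T := fun h => lt_irrefl i' (ha i' h)
          have ihT' : pdi ((List.map (fun j : Fin n => q ^ (j : ℕ) • Y j) T).prod)
              = 0 := by
            rw [ihT, if_neg hiT, if_neg hi'T]
          rw [hp2, ihT']
          have hi'L : i' ∈ i' :: T := List.mem_cons_self
          rw [if_neg hiL, if_pos hi'L, List.erase_cons_head]
          have hTgt : ∀ j ∈ T, (i : ℕ) < (j : ℕ) := by
            intro j hj
            have h3 : i' < j := ha j hj
            have h4 : (i' : ℕ) < (j : ℕ) := h3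
            omega
          have hGT : ∀ j ∈ T, G q i j = q ^ (j : ℕ) • Y j := by
            intro j hj
            simp only [G, if_neg (not_lt.mpr (le_of_lt (hTgt j hj)))]
          have hGTprod : (T.map (G q i)).prod
              = (T.map fun j : Fin n => q ^ (j : ℕ) • Y j).prod := by
            congr 1; exact List.map_congr_left hGT
          rw [hGTprod, hii', mul_zero, add_zero]
          rw [smul_neg, ← neg_smul, smul_mul_assoc, one_mul]

end Aux

/-- The `q`-divided difference operators annihilate the twisted elementary `q`-symmetric
polynomials `ẽ_k = Σ_{i₁<⋯<i_k} x̃_{i₁}⋯x̃_{i_k}` (where `x̃ⱼ = q^{j−1} xⱼ`); hence the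
subalgebra generated by `ẽ₁,…,ẽₙ` lies in `∩ᵢ ker ∂ᵢ`. -/
theorem stmt17 (n : ℕ) (hn : 2 ≤ n) (q : ℂ) (hq : q ≠ 0)
    -- `σ i` is the braid-group algebra automorphism of `P^q_n`
    (σ : Fin n → (QPoly n q →ₐ[ℂ] QPoly n q))
    (hσ : ∀ i i' : Fin n, (i' : ℕ) = (i : ℕ) + 1 →
      σ i (Y i) = q • Y i' ∧ σ i (Y i') = q⁻¹ • Y i ∧
      (∀ j : Fin n, (i : ℕ) + 1 < (j : ℕ) → σ i (Y j) = q • Y j) ∧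
      (∀ j : Fin n, (j : ℕ) < (i : ℕ) → σ i (Y j) = q⁻¹ • Y j))
    -- `pd i` is the `q`-divided difference operator `∂ᵢ`
    (pd : Fin n → Module.End ℂ (QPoly n q))
    (hpd : ∀ i i' : Fin n, (i' : ℕ) = (i : ℕ) + 1 →
      pd i (Y i) = q • (1 : QPoly n q) ∧ pd i (Y i') = -1 ∧
      (∀ j : Fin n, j ≠ i → j ≠ i' → pd i (Y j) = 0))
    -- the `q`-Leibniz rule
    (hpdL : ∀ (i : Fin n) (f g : QPoly n q),
      pd i (f * g) = pd i f * g + σ i f * pd i g)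
    -- `e k` is the `k`-th twisted elementary `q`-symmetric polynomial `ẽ_k`
    (e : ℕ → QPoly n q)
    (he : ∀ k : ℕ, e k = ∑ S ∈ Finset.powersetCard k (Finset.univ : Finset (Fin n)),
      ((S.sort (· ≤ ·)).map fun j : Fin n => q ^ (j : ℕ) • Y j).prod) :
    (∀ i : Fin n, (i : ℕ) + 1 < n → ∀ k : ℕ, 1 ≤ k → k ≤ n → pd i (e k) = 0) ∧
    (∀ f ∈ Algebra.adjoin ℂ {g : QPoly n q | ∃ k : ℕ, 1 ≤ k ∧ k ≤ n ∧ g = e k},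
      ∀ i : Fin n, (i : ℕ) + 1 < n → pd i f = 0) := by
  classical
  -- main claim: pd i (e k) = 0 for all k
  have main : ∀ i : Fin n, (i : ℕ) + 1 < n → ∀ k : ℕ, pd i (e k) = 0 := by
    intro i hi k
    set i' : Fin n := ⟨(i : ℕ) + 1, hi⟩ with hi'def
    have hii' : (i' : ℕ) = (i : ℕ) + 1 := rfl
    obtain ⟨hσ1, hσ2, hσ3, hσ4⟩ := hσ i i' hii'
    obtain ⟨hp1, hp2, hp3⟩ := hpd i i' hii'
    have hii : i ≠ i' := by
      intro h
      have : (i : ℕ) = (i' : ℕ) := by rw [h]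
      omega
    rw [he k, map_sum]
    set F : Finset (Fin n) → QPoly n q := fun S =>
      pd i (((S.sort (· ≤ ·)).map fun j : Fin n => q ^ (j : ℕ) • Y j).prod) with hF
    show ∑ S ∈ Finset.powersetCard k Finset.univ, F S = 0
    -- formula for F S
    have hFS : ∀ S : Finset (Fin n), F S =
        if i ∈ S then
          (if i' ∈ S then 0
           else (q ^ ((i : ℕ) + 1)) • (((S.sort (· ≤ ·)).erase i).map (G q i)).prod)
        else
          (if i' ∈ S then
            (-(q ^ ((i : ℕ) + 1))) • (((S.sort (· ≤ ·)).erase i').map (G q i)).prod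
           else 0) := by
      intro S
      have h := key_prod i i' hii' (σ i) hσ1 hσ2 hσ4 (pd i) hp1 hp2 hp3 (hpdL i)
        (S.sort (· ≤ ·)) (Finset.sortedLT_sort S).pairwise
      simp only [Finset.mem_sort] at h
      exact h
    -- membership facts about the swap image
    have hmem : ∀ (S : Finset (Fin n)) (j : Fin n),
        j ∈ S.image (Equiv.swap i i') ↔ Equiv.swap i i' j ∈ S := by
      intro S j
      constructor
      · intro h
        obtain ⟨x, hx, hxj⟩ := Finset.mem_image.mp h
        rw [← hxj, Equiv.swap_apply_self]; exact hx
      · intro h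
        exact Finset.mem_image.mpr ⟨_, h, Equiv.swap_apply_self _ _ _⟩
    have hmi : ∀ S : Finset (Fin n), i ∈ S.image (Equiv.swap i i') ↔ i' ∈ S := by
      intro S; rw [hmem S i, Equiv.swap_apply_left]
    have hmi' : ∀ S : Finset (Fin n), i' ∈ S.image (Equiv.swap i i') ↔ i ∈ S := by
      intro S; rw [hmem S i', Equiv.swap_apply_right]
    -- the crucial list identity
    have hlist : ∀ S : Finset (Fin n), i ∈ S → i' ∉ S →
        (Finset.sort S (· ≤ ·)).erase i
          = (Finset.sort (S.image (Equiv.swap i i')) (· ≤ ·)).erase i' := by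
      intro S h1 h2
      set S' := S.image (Equiv.swap i i') with hS'
      have nd1 : ((Finset.sort S (· ≤ ·)).erase i).Nodup :=
        (Finset.sort_nodup S _).erase _
      have nd2 : ((Finset.sort S' (· ≤ ·)).erase i').Nodup :=
        (Finset.sort_nodup S' _).erase _
      refine (fun hp h1 h2 => List.Perm.eq_of_pairwise' (r := (· < ·)) h1 h2 hp) ?_ ?_ ?_
      · rw [List.perm_ext_iff_of_nodup nd1 nd2]
        intro j
        rw [(Finset.sort_nodup S _).mem_erase_iff, (Finset.sort_nodup S' _).mem_erase_iff,
          Finset.mem_sort, Finset.mem_sort, hmem S j]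
        constructor
        · rintro ⟨hji, hjS⟩
          have hji' : j ≠ i' := fun h => h2 (h ▸ hjS)
          refine ⟨hji', ?_⟩
          rw [Equiv.swap_apply_of_ne_of_ne hji hji']
          exact hjS
        · rintro ⟨hji', hjS'⟩
          have hji : j ≠ i := by
            intro h
            rw [h, Equiv.swap_apply_left] at hjS'
            exact h2 hjS'
          rw [Equiv.swap_apply_of_ne_of_ne hji hji'] at hjS'
          exact ⟨hji, hjS'⟩
      · exact List.Pairwise.sublist List.erase_sublist (Finset.sortedLT_sort S).pairwise
      · exact List.Pairwise.sublist List.erase_sublist (Finset.sortedLT_sort S').pairwise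
    -- apply the involution
    refine Finset.sum_involution (fun S _ => S.image (Equiv.swap i i')) ?_ ?_ ?_ ?_
    · -- cancellation
      intro S hS
      by_cases h1 : i ∈ S <;> by_cases h2 : i' ∈ S
      · rw [hFS S, hFS _]
        simp [h1, h2, hmi S, hmi' S]
      · rw [hFS S, hFS _]
        simp only [h1, h2, hmi S, hmi' S, if_true, if_false]
        rw [hlist S h1 h2]
        module
      · rw [hFS S, hFS _]
        simp only [h1, h2, hmi S, hmi' S, if_true, if_false]
        have h1' : i ∈ S.image (Equiv.swap i i') := (hmi S).mpr h2
        have h2' : i' ∉ S.image (Equiv.swap i i') := fun h => h1 ((hmi' S).mp h)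
        have := hlist (S.image (Equiv.swap i i')) h1' h2'
        have himg2 : (S.image (Equiv.swap i i')).image (Equiv.swap i i') = S := by
          rw [Finset.image_image]
          have hid : (Equiv.swap i i') ∘ (Equiv.swap i i') = id := by
            funext x; simp [Equiv.swap_apply_self]
          rw [hid, Finset.image_id]
        rw [himg2] at this
        rw [← this]
        module
      · rw [hFS S, hFS _]
        simp [h1, h2, hmi S, hmi' S]
    · -- nonzero terms are not fixed
      intro S hS hFne hfix
      replace hfix : S.image (Equiv.swap i i') = S := hfix
      apply hFne
      rw [hFS S]
      by_cases h1 : i ∈ S <;> by_cases h2 : i' ∈ S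
      · simp [h1, h2]
      · exfalso
        have h3 : i' ∈ S.image (Equiv.swap i i') := (hmi' S).mpr h1
        rw [hfix] at h3; exact h2 h3
      · exfalso
        have h3 : i ∈ S.image (Equiv.swap i i') := (hmi S).mpr h2
        rw [hfix] at h3; exact h1 h3
      · simp [h1, h2]
    · -- stays in the index set
      intro S hS
      rw [Finset.mem_powersetCard] at hS ⊢
      exact ⟨Finset.subset_univ _,
        by rw [Finset.card_image_of_injective _ (Equiv.injective _)]; exact hS.2⟩
    · -- involutive
      intro S hS
      show (S.image (Equiv.swap i i')).image (Equiv.swap i i') = S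
      rw [Finset.image_image]
      have hid : (Equiv.swap i i') ∘ (Equiv.swap i i') = id := by
        funext x; simp [Equiv.swap_apply_self]
      rw [hid, Finset.image_id]
  constructor
  · intro i hi k _ _; exact main i hi k
  · intro f hf i hi
    induction hf using Algebra.adjoin_induction with
    | mem x hx =>
        obtain ⟨k, _, _, rfl⟩ := hx
        exact main i hi k
    | algebraMap r =>
        have h1 : pd i 1 = 0 := pd_one (σ i) (pd i) (hpdL i)
        rw [Algebra.algebraMap_eq_smul_one, map_smul, h1, smul_zero]
    | add x y hx hy hx' hy' => rw [map_add, hx', hy', add_zero]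
    | mul x y hx hy hx' hy' => rw [hpdL, hx', hy', zero_mul, mul_zero, add_zero]
end
end

section
/- (Defining relations of the q-nilHecke algebra.) As operators on P^q_n, with x_j denoting left multiplication by x_j, the following hold: ∂_i² = 0 for 1 ≤ i ≤ n−1; ∂_j ∂_i − q ∂_i ∂_j = 0 for j > i+1; ∂_i x_j − q x_j ∂_i = 0 for j > i+1; q ∂_i x_j − x_j ∂_i = 0 for j < i; ∂_i x_i − q x_{i+1} ∂_i = q; and x_i ∂_i − q ∂_i x_{i+1} = q. -/
noncomputable section

theorem key {n : ℕ} {q : ℂ} (D : QPoly n q →ₗ[ℂ] QPoly n q)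
    (α β : QPoly n q →ₐ[ℂ] QPoly n q)
    (h1 : D 1 = 0) (hY : ∀ k : Fin n, D (Y k) = 0)
    (hmul : ∀ f g, D (f * g) = D f * α g + β f * D g) :
    ∀ x, D x = 0 := by
  intro x
  obtain ⟨a, rfl⟩ := RingQuot.mkAlgHom_surjective ℂ (QRel n q) x
  induction a with
  | grade0 r =>
      rw [AlgHom.commutes, Algebra.algebraMap_eq_smul_one, map_smul, h1, smul_zero]
  | grade1 i => exact hY i
  | mul a b ha hb => rw [map_mul, hmul, ha, hb, zero_mul, mul_zero, add_zero]
  | add a b ha hb => rw [map_add, map_add, ha, hb, add_zero]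


set_option maxHeartbeats 1000000 in
/-- The defining relations of the `q`-nilHecke algebra, as operator identities on `P^q_n`
(with `xⱼ` denoting left multiplication): `∂ᵢ² = 0`; `∂ⱼ∂ᵢ − q∂ᵢ∂ⱼ = 0` for `j > i+1`;
`∂ᵢxⱼ − qxⱼ∂ᵢ = 0` for `j > i+1`; `q∂ᵢxⱼ − xⱼ∂ᵢ = 0` for `j < i`;
`∂ᵢxᵢ − qx_{i+1}∂ᵢ = q`; and `xᵢ∂ᵢ − q∂ᵢx_{i+1} = q`. -/
theorem stmt18 (n : ℕ) (hn : 2 ≤ n) (q : ℂ) (hq : q ≠ 0)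
    -- `σ i` is the braid-group algebra automorphism of `P^q_n`
    (σ : Fin n → (QPoly n q →ₐ[ℂ] QPoly n q))
    (hσ : ∀ i i' : Fin n, (i' : ℕ) = (i : ℕ) + 1 →
      σ i (Y i) = q • Y i' ∧ σ i (Y i') = q⁻¹ • Y i ∧
      (∀ j : Fin n, (i : ℕ) + 1 < (j : ℕ) → σ i (Y j) = q • Y j) ∧
      (∀ j : Fin n, (j : ℕ) < (i : ℕ) → σ i (Y j) = q⁻¹ • Y j))
    -- `pd i` is the `q`-divided difference operator `∂ᵢ`
    (pd : Fin n → Module.End ℂ (QPoly n q))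
    (hpd : ∀ i i' : Fin n, (i' : ℕ) = (i : ℕ) + 1 →
      pd i (Y i) = q • (1 : QPoly n q) ∧ pd i (Y i') = -1 ∧
      (∀ j : Fin n, j ≠ i → j ≠ i' → pd i (Y j) = 0))
    -- the `q`-Leibniz rule
    (hpdL : ∀ (i : Fin n) (f g : QPoly n q),
      pd i (f * g) = pd i f * g + σ i f * pd i g)
 :
    (∀ i i' : Fin n, (i' : ℕ) = (i : ℕ) + 1 → pd i * pd i = 0) ∧
    (∀ i i' j j' : Fin n, (i' : ℕ) = (i : ℕ) + 1 → (j' : ℕ) = (j : ℕ) + 1 →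
      (i : ℕ) + 1 < (j : ℕ) → pd j * pd i - q • (pd i * pd j) = 0) ∧
    (∀ i i' j : Fin n, (i' : ℕ) = (i : ℕ) + 1 → (i : ℕ) + 1 < (j : ℕ) →
      pd i * mulY j - q • (mulY j * pd i) = 0) ∧
    (∀ i i' j : Fin n, (i' : ℕ) = (i : ℕ) + 1 → (j : ℕ) < (i : ℕ) →
      q • (pd i * mulY j) - mulY j * pd i = 0) ∧
    (∀ i i' : Fin n, (i' : ℕ) = (i : ℕ) + 1 →
      pd i * mulY i - q • (mulY i' * pd i) = q • (1 : Module.End ℂ (QPoly n q))) ∧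
    (∀ i i' : Fin n, (i' : ℕ) = (i : ℕ) + 1 →
      mulY i * pd i - q • (pd i * mulY i') = q • (1 : Module.End ℂ (QPoly n q))) := by
  have hq1 : q⁻¹ * q = 1 := inv_mul_cancel₀ hq
  have hq2 : q * q⁻¹ = 1 := mul_inv_cancel₀ hq
  have hpd1 : ∀ a : Fin n, pd a (1 : QPoly n q) = 0 := by
    intro a
    have h := hpdL a 1 1
    simp only [mul_one, one_mul, map_one] at h
    exact (left_eq_add.mp h)
  -- σᵢ∂ᵢ + ∂ᵢσᵢ = 0
  have hA : ∀ i i' : Fin n, (i' : ℕ) = (i : ℕ) + 1 →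
      ∀ f, σ i (pd i f) + pd i (σ i f) = 0 := by
    intro i i' hi'
    obtain ⟨s1, s2, s3, s4⟩ := hσ i i' hi'
    obtain ⟨p1, p2, p3⟩ := hpd i i' hi'
    have h : ∀ x, ((σ i).toLinearMap ∘ₗ (pd i) + (pd i) ∘ₗ (σ i).toLinearMap) x = 0 := by
      apply key _ (σ i) ((σ i).comp (σ i))
      · simp [hpd1 i]
      · intro k
        simp only [LinearMap.add_apply, LinearMap.coe_comp, Function.comp_apply,
          AlgHom.toLinearMap_apply]
        by_cases h1 : k = i
        · rw [h1]; simp [p1, p2, s1]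
        · by_cases h2 : k = i'
          · rw [h2]; simp [p1, p2, s2, smul_smul, hq1]
          · rw [p3 k h1 h2, map_zero, zero_add]
            by_cases h3 : (k : ℕ) < (i : ℕ)
            · simp [s4 k h3, p3 k h1 h2]
            · have hgt : (i : ℕ) + 1 < (k : ℕ) := by
                simp only [ne_eq, Fin.ext_iff] at h1 h2; omega
              simp [s3 k hgt, p3 k h1 h2]
      · intro f g
        simp only [LinearMap.add_apply, LinearMap.coe_comp, Function.comp_apply,
          AlgHom.toLinearMap_apply, AlgHom.coe_comp]
        rw [hpdL i f g, map_add, map_mul, map_mul, map_mul, hpdL i (σ i f) (σ i g)]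
        rw [add_mul, mul_add]
        abel
    intro f
    simpa using h f
  -- σⱼσᵢ = σᵢσⱼ for j > i+1
  have hE : ∀ i i' j j' : Fin n, (i' : ℕ) = (i : ℕ) + 1 → (j' : ℕ) = (j : ℕ) + 1 →
      (i : ℕ) + 1 < (j : ℕ) → ∀ f, σ j (σ i f) = σ i (σ j f) := by
    intro i i' j j' hi' hj' hij
    obtain ⟨si1, si2, si3, si4⟩ := hσ i i' hi'
    obtain ⟨sj1, sj2, sj3, sj4⟩ := hσ j j' hj'
    have h : ∀ x, ((σ j).toLinearMap ∘ₗ (σ i).toLinearMap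
        - (σ i).toLinearMap ∘ₗ (σ j).toLinearMap) x = 0 := by
      apply key _ ((σ j).comp (σ i)) ((σ i).comp (σ j))
      · simp
      · intro k
        simp only [LinearMap.sub_apply, LinearMap.coe_comp, Function.comp_apply,
          AlgHom.toLinearMap_apply]
        by_cases h1 : k = i
        · rw [h1]
          simp [si1, sj4 i (by omega), sj4 i' (by omega), smul_smul, hq1, hq2]
        · by_cases h2 : k = i'
          · rw [h2]
            simp [si2, sj4 i (by omega), sj4 i' (by omega), smul_smul]
          · by_cases h3 : k = j
            · rw [h3]
              simp [sj1, si3 j hij, si3 j' (by omega), smul_smul, mul_comm]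
            · by_cases h4 : k = j'
              · rw [h4]
                simp [sj2, si3 j hij, si3 j' (by omega), smul_smul, hq1, hq2]
              · by_cases h5 : (k : ℕ) < (i : ℕ)
                · simp [si4 k h5, sj4 k (by omega), smul_smul]
                · have hgt : (i : ℕ) + 1 < (k : ℕ) := by
                    simp only [ne_eq, Fin.ext_iff] at h1 h2; omega
                  by_cases h6 : (k : ℕ) < (j : ℕ)
                  · simp [si3 k hgt, sj4 k h6, smul_smul, hq1, hq2]
                  · have hgt' : (j : ℕ) + 1 < (k : ℕ) := by
                      simp only [ne_eq, Fin.ext_iff] at h3 h4; omega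
                    simp [si3 k hgt, sj3 k hgt', smul_smul]
      · intro f g
        simp only [LinearMap.sub_apply, LinearMap.coe_comp, Function.comp_apply,
          AlgHom.toLinearMap_apply, AlgHom.coe_comp]
        rw [map_mul, map_mul, map_mul, map_mul, sub_mul, mul_sub]
        abel
    intro f
    have := h f
    simp only [LinearMap.sub_apply, LinearMap.coe_comp, Function.comp_apply,
      AlgHom.toLinearMap_apply] at this
    exact sub_eq_zero.mp this
  -- σⱼ∂ᵢ = q ∂ᵢσⱼ for j > i+1
  have hB : ∀ i i' j j' : Fin n, (i' : ℕ) = (i : ℕ) + 1 → (j' : ℕ) = (j : ℕ) + 1 →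
      (i : ℕ) + 1 < (j : ℕ) → ∀ f, σ j (pd i f) = q • pd i (σ j f) := by
    intro i i' j j' hi' hj' hij
    obtain ⟨si1, si2, si3, si4⟩ := hσ i i' hi'
    obtain ⟨sj1, sj2, sj3, sj4⟩ := hσ j j' hj'
    obtain ⟨pi1, pi2, pi3⟩ := hpd i i' hi'
    have h : ∀ x, ((σ j).toLinearMap ∘ₗ (pd i)
        - q • ((pd i) ∘ₗ (σ j).toLinearMap)) x = 0 := by
      apply key _ (σ j) ((σ j).comp (σ i))
      · simp [hpd1 i]
      · intro k
        simp only [LinearMap.sub_apply, LinearMap.smul_apply, LinearMap.coe_comp,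
          Function.comp_apply, AlgHom.toLinearMap_apply]
        by_cases h1 : k = i
        · rw [h1]
          simp [pi1, sj4 i (by omega), smul_smul, mul_assoc, hq1, hq2]
        · by_cases h2 : k = i'
          · rw [h2]
            simp [pi2, sj4 i' (by omega), smul_smul, mul_assoc, hq1, hq2]
          · rw [pi3 k h1 h2, map_zero, zero_sub, neg_eq_zero]
            by_cases h3 : (k : ℕ) < (j : ℕ)
            · simp [sj4 k h3, pi3 k h1 h2]
            · by_cases h4 : k = j
              · rw [h4]
                simp [sj1, pi3 j' (by simp only [ne_eq, Fin.ext_iff]; omega)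
                  (by simp only [ne_eq, Fin.ext_iff]; omega)]
              · by_cases h5 : k = j'
                · rw [h5]
                  simp [sj2, pi3 j (by simp only [ne_eq, Fin.ext_iff]; omega)
                    (by simp only [ne_eq, Fin.ext_iff]; omega)]
                · have hgt : (j : ℕ) + 1 < (k : ℕ) := by
                    simp only [ne_eq, Fin.ext_iff] at h4 h5; omega
                  simp [sj3 k hgt, pi3 k h1 h2]
      · intro f g
        simp only [LinearMap.sub_apply, LinearMap.smul_apply, LinearMap.coe_comp,
          Function.comp_apply, AlgHom.toLinearMap_apply, AlgHom.coe_comp]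
        rw [hpdL i f g, map_add, map_mul, map_mul, map_mul,
          hpdL i (σ j f) (σ j g), ← hE i i' j j' hi' hj' hij f]
        simp only [smul_add, sub_mul, mul_sub, smul_mul_assoc, mul_smul_comm]
        abel
    intro f
    have := h f
    simp only [LinearMap.sub_apply, LinearMap.smul_apply, LinearMap.coe_comp,
      Function.comp_apply, AlgHom.toLinearMap_apply] at this
    exact sub_eq_zero.mp this
  -- ∂ⱼσᵢ = q σᵢ∂ⱼ for j > i+1
  have hC : ∀ i i' j j' : Fin n, (i' : ℕ) = (i : ℕ) + 1 → (j' : ℕ) = (j : ℕ) + 1 →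
      (i : ℕ) + 1 < (j : ℕ) → ∀ f, pd j (σ i f) = q • σ i (pd j f) := by
    intro i i' j j' hi' hj' hij
    obtain ⟨si1, si2, si3, si4⟩ := hσ i i' hi'
    obtain ⟨pj1, pj2, pj3⟩ := hpd j j' hj'
    have h : ∀ x, ((pd j) ∘ₗ (σ i).toLinearMap
        - q • ((σ i).toLinearMap ∘ₗ (pd j))) x = 0 := by
      apply key _ (σ i) ((σ j).comp (σ i))
      · simp [hpd1 j]
      · intro k
        simp only [LinearMap.sub_apply, LinearMap.smul_apply, LinearMap.coe_comp,
          Function.comp_apply, AlgHom.toLinearMap_apply]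
        by_cases h3 : k = j
        · rw [h3]
          simp [si3 j hij, pj1, smul_smul, mul_comm]
        · by_cases h4 : k = j'
          · rw [h4]
            simp [si3 j' (by omega), pj2]
          · rw [pj3 k h3 h4, map_zero, smul_zero, sub_zero]
            by_cases h1 : k = i
            · rw [h1]
              simp [si1, pj3 i (by simp only [ne_eq, Fin.ext_iff]; omega)
                (by simp only [ne_eq, Fin.ext_iff]; omega),
                pj3 i' (by simp only [ne_eq, Fin.ext_iff]; omega)
                (by simp only [ne_eq, Fin.ext_iff]; omega)]
            · by_cases h2 : k = i'
              · rw [h2]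
                simp [si2, pj3 i (by simp only [ne_eq, Fin.ext_iff]; omega)
                  (by simp only [ne_eq, Fin.ext_iff]; omega)]
              · by_cases h5 : (k : ℕ) < (i : ℕ)
                · simp [si4 k h5, pj3 k h3 h4]
                · have hgt : (i : ℕ) + 1 < (k : ℕ) := by
                    simp only [ne_eq, Fin.ext_iff] at h1 h2; omega
                  simp [si3 k hgt, pj3 k h3 h4]
      · intro f g
        simp only [LinearMap.sub_apply, LinearMap.smul_apply, LinearMap.coe_comp,
          Function.comp_apply, AlgHom.toLinearMap_apply, AlgHom.coe_comp]
        rw [map_mul, hpdL j (σ i f) (σ i g), hpdL j f g, map_add, map_mul, map_mul,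
          ← hE i i' j j' hi' hj' hij f]
        simp only [smul_add, sub_mul, mul_sub, smul_mul_assoc, mul_smul_comm]
        abel
    intro f
    have := h f
    simp only [LinearMap.sub_apply, LinearMap.smul_apply, LinearMap.coe_comp,
      Function.comp_apply, AlgHom.toLinearMap_apply] at this
    exact sub_eq_zero.mp this
  refine ⟨?_, ?_, ?_, ?_, ?_, ?_⟩
  · -- ∂ᵢ² = 0
    intro i i' hi'
    obtain ⟨p1, p2, p3⟩ := hpd i i' hi'
    have h : ∀ x, ((pd i) ∘ₗ (pd i)) x = 0 := by
      apply key _ (AlgHom.id ℂ (QPoly n q)) ((σ i).comp (σ i))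
      · simp [hpd1 i]
      · intro k
        simp only [LinearMap.coe_comp, Function.comp_apply]
        by_cases h1 : k = i
        · rw [h1]; simp [p1, hpd1 i]
        · by_cases h2 : k = i'
          · rw [h2]; simp [p2, hpd1 i]
          · simp [p3 k h1 h2]
      · intro f g
        simp only [LinearMap.coe_comp, Function.comp_apply, AlgHom.coe_id, id_eq,
          AlgHom.coe_comp]
        have hAf : σ i (pd i f) * pd i g + pd i (σ i f) * pd i g = 0 := by
          rw [← add_mul, hA i i' hi' f, zero_mul]
        rw [hpdL i f g, map_add, hpdL i (pd i f) g, hpdL i (σ i f) (pd i g),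
          show σ i (pd i f) * pd i g = -(pd i (σ i f) * pd i g) from
            eq_neg_of_add_eq_zero_left hAf]
        abel
    ext f
    have := h f
    simpa [Module.End.mul_apply] using this
  · -- ∂ⱼ∂ᵢ - q∂ᵢ∂ⱼ = 0
    intro i i' j j' hi' hj' hij
    obtain ⟨pi1, pi2, pi3⟩ := hpd i i' hi'
    obtain ⟨pj1, pj2, pj3⟩ := hpd j j' hj'
    have h : ∀ x, ((pd j) ∘ₗ (pd i) - q • ((pd i) ∘ₗ (pd j))) x = 0 := by
      apply key _ (AlgHom.id ℂ (QPoly n q)) ((σ j).comp (σ i))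
      · simp [hpd1]
      · intro k
        simp only [LinearMap.sub_apply, LinearMap.smul_apply, LinearMap.coe_comp,
          Function.comp_apply]
        by_cases h1 : k = i
        · rw [h1]
          simp [pi1, hpd1 j, pj3 i (by simp only [ne_eq, Fin.ext_iff]; omega)
            (by simp only [ne_eq, Fin.ext_iff]; omega)]
        · by_cases h2 : k = i'
          · rw [h2]
            simp [pi2, hpd1 j, pj3 i' (by simp only [ne_eq, Fin.ext_iff]; omega)
              (by simp only [ne_eq, Fin.ext_iff]; omega)]
          · rw [pi3 k h1 h2, map_zero, zero_sub, neg_eq_zero]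
            by_cases h3 : k = j
            · rw [h3]; simp [pj1, hpd1 i]
            · by_cases h4 : k = j'
              · rw [h4]; simp [pj2, hpd1 i]
              · simp [pj3 k h3 h4]
      · intro f g
        simp only [LinearMap.sub_apply, LinearMap.smul_apply, LinearMap.coe_comp,
          Function.comp_apply, AlgHom.coe_id, id_eq, AlgHom.coe_comp]
        rw [hpdL i f g, map_add, hpdL j (pd i f) g, hpdL j (σ i f) (pd i g),
          hpdL j f g, map_add, hpdL i (pd j f) g, hpdL i (σ j f) (pd j g),
          hB i i' j j' hi' hj' hij f, hC i i' j j' hi' hj' hij f,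
          ← hE i i' j j' hi' hj' hij f]
        simp only [smul_add, sub_mul, mul_sub, smul_mul_assoc, mul_smul_comm]
        abel
    ext f
    have := h f
    simpa [Module.End.mul_apply] using this
  · -- ∂ᵢxⱼ - qxⱼ∂ᵢ = 0, j > i + 1
    intro i i' j hi' hij
    obtain ⟨s1, s2, s3, s4⟩ := hσ i i' hi'
    obtain ⟨p1, p2, p3⟩ := hpd i i' hi'
    ext f
    simp only [LinearMap.sub_apply, LinearMap.smul_apply, Module.End.mul_apply,
      LinearMap.zero_apply, mulY, LinearMap.mulLeft_apply]
    rw [hpdL i (Y j) f, p3 j (by simp only [ne_eq, Fin.ext_iff]; omega)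
      (by simp only [ne_eq, Fin.ext_iff]; omega), s3 j hij]
    simp [smul_mul_assoc]
  · -- q∂ᵢxⱼ - xⱼ∂ᵢ = 0, j < i
    intro i i' j hi' hij
    obtain ⟨s1, s2, s3, s4⟩ := hσ i i' hi'
    obtain ⟨p1, p2, p3⟩ := hpd i i' hi'
    ext f
    simp only [LinearMap.sub_apply, LinearMap.smul_apply, Module.End.mul_apply,
      LinearMap.zero_apply, mulY, LinearMap.mulLeft_apply]
    rw [hpdL i (Y j) f, p3 j (by simp only [ne_eq, Fin.ext_iff]; omega)
      (by simp only [ne_eq, Fin.ext_iff]; omega), s4 j hij]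
    simp [smul_mul_assoc, smul_smul, hq2]
  · -- ∂ᵢxᵢ - qx_{i+1}∂ᵢ = q
    intro i i' hi'
    obtain ⟨s1, s2, s3, s4⟩ := hσ i i' hi'
    obtain ⟨p1, p2, p3⟩ := hpd i i' hi'
    ext f
    simp only [LinearMap.sub_apply, LinearMap.smul_apply, Module.End.mul_apply,
      Module.End.one_apply, mulY, LinearMap.mulLeft_apply]
    rw [hpdL i (Y i) f, p1, s1]
    simp [smul_mul_assoc]
  · -- xᵢ∂ᵢ - q∂ᵢx_{i+1} = q
    intro i i' hi'
    obtain ⟨s1, s2, s3, s4⟩ := hσ i i' hi'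
    obtain ⟨p1, p2, p3⟩ := hpd i i' hi'
    ext f
    simp only [LinearMap.sub_apply, LinearMap.smul_apply, Module.End.mul_apply,
      Module.End.one_apply, mulY, LinearMap.mulLeft_apply]
    rw [hpdL i (Y i') f, p2, s2]
    have h1 : q • ((-1 : QPoly n q) * f + q⁻¹ • Y i * pd i f)
        = -(q • f) + Y i * pd i f := by
      rw [neg_one_mul f, smul_add, smul_neg, smul_mul_assoc, smul_smul, hq2, one_smul]
    rw [h1]
    abel
end
end
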